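/- arXiv:0808.2162 — 13 statements merged into one kernel-verified Lean document; each statement's English description precedes it below -/
import Mathlib

section
/- If G is a symmetric numerical semigroup with Frobenius number f and multiplicity n₁ (the smallest nonzero element), then for every z ∈ G with z > f, the maximal length ord_G(z) of z (the maximum of Σaᵢ over all representations z = Σ aᵢ nᵢ with aᵢ ∈ ℕ₀, where n₁,…,n_d are the minimal generators) is at least the minimal length min-ord_G(f + n₁) of f + n₁. -/
/-- The numerical semigroup generated by `n 0, …, n (d-1)`. -/
def semigroupGen (d : ℕ) (n : Fin d → ℕ) : Set ℕ :=
  {z | ∃ a : Fin d → ℕ, ∑ i, a i * n i = z}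

/-- The set of lengths `∑ aᵢ` of representations `z = ∑ aᵢ nᵢ`. -/
def repLengths (d : ℕ) (n : Fin d → ℕ) (z : ℕ) : Set ℕ :=
  {s | ∃ a : Fin d → ℕ, (∑ i, a i * n i = z) ∧ (∑ i, a i = s)}

/-- Membership of an integer in the numerical semigroup. -/
def memZ (d : ℕ) (n : Fin d → ℕ) (z : ℤ) : Prop :=
  ∃ x ∈ semigroupGen d n, (x : ℤ) = z

/-- `G` is symmetric with respect to the Frobenius number `f`. -/
def IsSymmetricWith (d : ℕ) (n : Fin d → ℕ) (f : ℕ) : Prop :=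
  ∀ z : ℤ, memZ d n z ↔ ¬ memZ d n ((f : ℤ) - z)

/-- The given generators are a minimal generating system. -/
def MinimallyGenerated (d : ℕ) (n : Fin d → ℕ) : Prop :=
  ∀ i : Fin d, ¬ ∃ a : Fin d → ℕ, a i = 0 ∧ ∑ j, a j * n j = n i

theorem stmt_0 (d : ℕ) (hd : 0 < d) (n : Fin d → ℕ)
    (hpos : ∀ i, 0 < n i) (hmono : StrictMono n)
    (hmin : MinimallyGenerated d n)
    (f : ℕ) (hfnot : f ∉ semigroupGen d n)
    (hfro : ∀ m : ℕ, f < m → m ∈ semigroupGen d n)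
    (hsym : IsSymmetricWith d n f)
    (z : ℕ) (hz : z ∈ semigroupGen d n) (hzf : f < z)
    (o m : ℕ)
    (ho : IsGreatest (repLengths d n z) o)
    (hm : IsLeast (repLengths d n (f + n ⟨0, hd⟩)) m) :
    m ≤ o := by
  set i0 : Fin d := ⟨0, hd⟩ with hi0
  set n1 : ℕ := n i0 with hn1def
  have hn1 : 0 < n1 := hpos i0
  have hn1le : ∀ i : Fin d, n1 ≤ n i := by
    intro i
    exact hmono.monotone (by simp [hi0, Fin.le_def])
  classical
  -- P j : we can subtract j copies of n1 from z and stay in G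
  set P : ℕ → Prop := fun j => j * n1 ≤ z ∧ (z - j * n1) ∈ semigroupGen d n with hP
  have hP0 : P 0 := by simpa [hP] using hz
  set k : ℕ := Nat.findGreatest P z with hk
  have hPk : P k := Nat.findGreatest_spec (Nat.zero_le z) hP0
  have hnotPk1 : ¬ P (k + 1) := by
    by_cases h : k + 1 ≤ z
    · exact Nat.findGreatest_is_greatest (Nat.lt_succ_self k) h
    · intro hp
      apply h
      calc k + 1 ≤ (k + 1) * n1 := Nat.le_mul_of_pos_right _ hn1
        _ ≤ z := hp.1
  set w : ℕ := z - k * n1 with hw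
  have hwz : w + k * n1 = z := Nat.sub_add_cancel hPk.1
  have hk1 : (k + 1) * n1 = k * n1 + n1 := by ring
  have hwG : w ∈ semigroupGen d n := hPk.2
  -- w - n1 ∉ G over ℤ
  have hwn1 : ¬ memZ d n ((w : ℤ) - (n1 : ℤ)) := by
    rintro ⟨x, hxG, hxeq⟩
    apply hnotPk1
    have hxw : x + n1 = w := by
      have : (x : ℤ) + n1 = (w : ℤ) := by linarith
      exact_mod_cast this
    constructor
    · have : n1 ≤ w := by omega
      omega
    · have : z - (k + 1) * n1 = x := by
        have := hwz
        have hn1w : n1 ≤ w := by omega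
        omega
      rwa [this]
  -- symmetry: f + n1 - w ∈ G over ℤ
  have hsymw := (hsym ((f : ℤ) + n1 - w))
  have hmemw' : memZ d n ((f : ℤ) + n1 - w) := by
    rw [hsymw]
    intro hmem
    apply hwn1
    have : (f : ℤ) - ((f : ℤ) + n1 - w) = (w : ℤ) - n1 := by ring
    rwa [this] at hmem
  obtain ⟨w', hw'G, hw'eq⟩ := hmemw'
  have hww' : w + w' = f + n1 := by
    have : (w : ℤ) + w' = (f : ℤ) + n1 := by linarith
    exact_mod_cast this
  -- factorizations
  obtain ⟨a, ha⟩ := hwG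
  obtain ⟨b, hb⟩ := hw'G
  set t : ℕ := ∑ i, a i with ht
  set t' : ℕ := ∑ i, b i with ht'
  -- t' ≤ k
  have htn1 : t' * n1 ≤ w' := by
    calc t' * n1 = ∑ i, b i * n1 := by rw [ht', Finset.sum_mul]
      _ ≤ ∑ i, b i * n i := Finset.sum_le_sum fun i _ => Nat.mul_le_mul_left _ (hn1le i)
      _ = w' := hb
  have hw'lt : w' < (k + 1) * n1 := by
    have hzval : z = w + k * n1 := hwz.symm
    have : f + n1 < w + k * n1 + n1 := by omega
    omega
  have ht'k : t' ≤ k := by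
    by_contra h
    push_neg at h
    have : (k + 1) * n1 ≤ t' * n1 := Nat.mul_le_mul_right _ h
    omega
  -- t + k is a length of z
  have hzo : t + k ∈ repLengths d n z := by
    refine ⟨fun i => a i + if i = i0 then k else 0, ?_, ?_⟩
    · have : ∑ i, (a i + if i = i0 then k else 0) * n i
          = ∑ i, a i * n i + ∑ i, (if i = i0 then k else 0) * n i := by
        rw [← Finset.sum_add_distrib]
        congr 1
        ext i
        ring
      rw [this, ha]
      have : ∑ i, (if i = i0 then k else 0) * n i = k * n1 := by
        simp [ite_mul, hn1def]
      rw [this, hwz]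
    · rw [Finset.sum_add_distrib, ← ht]
      simp
  have htko : t + k ≤ o := ho.2 hzo
  -- t + t' is a length of f + n1
  have hmtt' : m ≤ t + t' := by
    apply hm.2
    refine ⟨fun i => a i + b i, ?_, ?_⟩
    · have : ∑ i, (a i + b i) * n i = ∑ i, a i * n i + ∑ i, b i * n i := by
        rw [← Finset.sum_add_distrib]; congr 1; ext i; ring
      rw [this, ha, hb, hww']
    · rw [Finset.sum_add_distrib, ← ht, ← ht']
  omega
end

section
/- Let G be a symmetric numerical semigroup with minimal generators n₁ < ⋯ < n_d, Frobenius number f, and let z ∈ G with z > f. Write z = a·n₁ + w where w ∈ Ap(G, n₁) (so a = max{k : z − k·n₁ ∈ G}). Let w' = f + n₁ − w, which lies in Ap(G, n₁) by symmetry. Then a ≥ ord_G(w'). -/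
/-- The Apéry set of the semigroup with respect to `e`. -/
def aperySet (d : ℕ) (n : Fin d → ℕ) (e : ℕ) : Set ℕ :=
  {x | x ∈ semigroupGen d n ∧ ¬ ∃ y ∈ semigroupGen d n, y + e = x}

theorem stmt_1 (d : ℕ) (hd : 0 < d) (n : Fin d → ℕ)
    (hpos : ∀ i, 0 < n i) (hmono : StrictMono n)
    (hmin : MinimallyGenerated d n)
    (f : ℕ) (hfnot : f ∉ semigroupGen d n)
    (hfro : ∀ m : ℕ, f < m → m ∈ semigroupGen d n)
    (hsym : IsSymmetricWith d n f)
    (z : ℕ) (hz : z ∈ semigroupGen d n) (hzf : f < z)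
    (a : ℕ)
    (ha : IsGreatest {k : ℕ | ∃ y ∈ semigroupGen d n, k * n ⟨0, hd⟩ + y = z} a)
    (w : ℕ) (hw : a * n ⟨0, hd⟩ + w = z)
    (hwAp : w ∈ aperySet d n (n ⟨0, hd⟩))
    (w' : ℕ) (hw' : w + w' = f + n ⟨0, hd⟩)
    (hw'Ap : w' ∈ aperySet d n (n ⟨0, hd⟩)) :
    ∀ s : ℕ, IsGreatest (repLengths d n w') s → s ≤ a := by
  intro s hs
  obtain ⟨b, hb, hbs⟩ := hs.1
  have h1 : s * n ⟨0, hd⟩ ≤ w' := by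
    calc s * n ⟨0, hd⟩ = ∑ i, b i * n ⟨0, hd⟩ := by rw [← hbs, Finset.sum_mul]
    _ ≤ ∑ i, b i * n i := by
        apply Finset.sum_le_sum
        intro i _
        exact Nat.mul_le_mul_left _ (hmono.monotone (by exact Fin.mk_le_mk.mpr (Nat.zero_le _) : (⟨0, hd⟩ : Fin d) ≤ i))
    _ = w' := hb
  have h2 : w' < (a + 1) * n ⟨0, hd⟩ := by nlinarith
  have h3 : s * n ⟨0, hd⟩ < (a + 1) * n ⟨0, hd⟩ := lt_of_le_of_lt h1 h2
  exact Nat.lt_succ_iff.mp (Nat.lt_of_mul_lt_mul_right h3)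
end

section
/- Let G be a numerical semigroup with multiplicity e (smallest nonzero element) and Frobenius number f, and let ω₀ = 0 < ω₁ < ⋯ < ω_{e−1} be the elements of the Apéry set Ap(G, e) listed in increasing order. Then G is symmetric if and only if ωᵢ + ω_{e−1−i} = ω_{e−1} for all 0 ≤ i ≤ e − 1. -/
theorem stmt_3 (G : Set ℕ) (h0 : 0 ∈ G)
    (hadd : ∀ x ∈ G, ∀ y ∈ G, x + y ∈ G)
    (f : ℕ) (hf : f ∉ G) (hfro : ∀ m : ℕ, f < m → m ∈ G)
    (e : ℕ) (hepos : 0 < e) (he : IsLeast {x | x ∈ G ∧ 0 < x} e)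
    (ω : Fin e → ℕ) (hω : StrictMono ω)
    (hrange : ∀ x : ℕ, (x ∈ G ∧ ¬ ∃ y ∈ G, y + e = x) ↔ ∃ i : Fin e, ω i = x) :
    (∀ z : ℤ, (∃ x ∈ G, (x : ℤ) = z) ↔ ¬ ∃ x ∈ G, (x : ℤ) = (f : ℤ) - z) ↔
      (∀ i : Fin e, ω i + ω ⟨e - 1 - i.val, by omega⟩ = ω ⟨e - 1, by omega⟩) := by
  classical
  obtain ⟨⟨heG, _⟩, hemin⟩ := he
  -- adding multiples of e stays in G
  have hmul : ∀ k : ℕ, ∀ x ∈ G, x + k * e ∈ G := by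
    intro k
    induction k with
    | zero => intro x hx; simpa using hx
    | succ k ih =>
      intro x hx
      have h1 := hadd _ (ih x hx) e heG
      have h2 : x + k * e + e = x + (k + 1) * e := by ring
      rwa [h2] at h1
  -- every ω i is an Apéry element
  have hwAp : ∀ i : Fin e, ω i ∈ G ∧ ¬ ∃ y ∈ G, y + e = ω i :=
    fun i => (hrange (ω i)).mpr ⟨i, rfl⟩
  -- every Apéry element is at most f + e
  have hle : ∀ i : Fin e, ω i ≤ f + e := by
    intro i
    by_contra h
    push_neg at h
    have h1 : ω i - e ∈ G := hfro _ (by omega)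
    exact (hwAp i).2 ⟨ω i - e, h1, by omega⟩
  -- the largest Apéry element is f + e
  have htop' : ∀ q : e - 1 < e, ω ⟨e - 1, q⟩ = f + e := by
    intro q
    have hmem : f + e ∈ G ∧ ¬ ∃ y ∈ G, y + e = f + e := by
      refine ⟨hfro _ (by omega), ?_⟩
      rintro ⟨y, hy, hye⟩
      have : y = f := by omega
      exact hf (this ▸ hy)
    obtain ⟨j, hj⟩ := (hrange (f + e)).mp hmem
    have hjle : j.val ≤ e - 1 := by omega
    have h1 : ω j ≤ ω ⟨e - 1, q⟩ := hω.monotone (Fin.le_def.mpr hjle)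
    have h2 := hle ⟨e - 1, q⟩
    omega
  have htop : ω ⟨e - 1, by omega⟩ = f + e := htop' _
  -- lemma A: a strictly monotone self-map of Fin e dominates the identity
  have lemA : ∀ (h : Fin e → Fin e), (∀ a b : Fin e, a < b → h a < h b) →
      ∀ i : Fin e, i.val ≤ (h i).val := by
    intro h hh
    have key : ∀ n (hn : n < e), n ≤ (h ⟨n, hn⟩).val := by
      intro n
      induction n with
      | zero => intro hn; exact Nat.zero_le _
      | succ n ih =>
        intro hn
        have h1 : n < e := by omega
        have h2 := hh ⟨n, h1⟩ ⟨n + 1, hn⟩ (Fin.mk_lt_mk.mpr (by omega))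
        have h3 := ih h1
        rw [Fin.lt_def] at h2
        omega
    exact fun i => key i.val i.isLt
  constructor
  · -- symmetric → Apéry symmetry
    intro hsymm
    -- Step 1: for each i, f + e - ω i is also an Apéry element
    have hstep : ∀ i : Fin e, ∃ j : Fin e, ω j + ω i = f + e := by
      intro i
      set x := ω i with hxdef
      have hx : x ∈ G := (hwAp i).1
      have hxap := (hwAp i).2
      have hxle : x ≤ f + e := hle i
      set y := f + e - x with hydef
      have hy' : (y : ℤ) = (f : ℤ) + (e : ℤ) - (x : ℤ) := by omega
      -- y ∈ G
      have hyG : y ∈ G := by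
        have h1 : ¬ ∃ t ∈ G, (t : ℤ) = (f : ℤ) - (y : ℤ) := by
          rintro ⟨t, ht, hty⟩
          exact hxap ⟨t, ht, by omega⟩
        obtain ⟨t, ht, hty⟩ := (hsymm (y : ℤ)).mpr h1
        have : t = y := by omega
        exact this ▸ ht
      -- y is an Apéry element
      have hyAp : ¬ ∃ t ∈ G, t + e = y := by
        rintro ⟨t, ht, hte⟩
        exact (hsymm (x : ℤ)).mp ⟨x, hx, rfl⟩ ⟨t, ht, by omega⟩
      obtain ⟨j, hj⟩ := (hrange y).mp ⟨hyG, hyAp⟩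
      exact ⟨j, by omega⟩
    choose ψ hψ using hstep
    have hanti : ∀ i i' : Fin e, i < i' → ψ i' < ψ i := by
      intro i i' h
      have h1 := hψ i
      have h2 := hψ i'
      have hw := hω h
      have h3 : ω (ψ i') < ω (ψ i) := by omega
      exact hω.lt_iff_lt.mp h3
    have hrev : ∀ i : Fin e, (ψ i).val = e - 1 - i.val := by
      intro i
      have hi := i.isLt
      have hpi := (ψ i).isLt
      -- upper bound: i ≤ (rev (ψ i)).val
      have hub := lemA (fun k => (ψ k).rev)
        (fun a b hab => Fin.rev_lt_rev.mpr (hanti a b hab)) i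
      simp only [Fin.val_rev] at hub
      -- lower bound
      have hlb := lemA (fun k => ψ k.rev)
        (fun a b hab => hanti _ _ (Fin.rev_lt_rev.mpr hab)) i.rev
      simp only [Fin.rev_rev, Fin.val_rev] at hlb
      omega
    intro i
    have hpsi : ψ i = ⟨e - 1 - i.val, by omega⟩ := Fin.ext (hrev i)
    have h1 := hψ i
    rw [hpsi] at h1
    have h2 := htop' (by omega)
    omega
  · -- Apéry symmetry → symmetric
    intro hAp
    -- key: for each Apéry element there is a complementary one
    have hcomp : ∀ i : Fin e, ∃ j : Fin e, ω i + ω j = f + e :=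
      fun i => ⟨_, (hAp i).trans htop⟩
    -- the key lemma: n ∉ G → f - n ∈ G
    have hkey : ∀ n : ℕ, n ∉ G → f - n ∈ G := by
      intro n hn
      have hnf : n ≤ f := by
        by_contra h
        exact hn (hfro n (by omega))
      have hK : ∃ k, n + k * e ∈ G := by
        refine ⟨f + 1, hfro _ ?_⟩
        have : f + 1 ≤ (f + 1) * e := Nat.le_mul_of_pos_right _ hepos
        omega
      set k := Nat.find hK with hkdef
      have hkG : n + k * e ∈ G := Nat.find_spec hK
      have hk0 : k ≠ 0 := by
        intro h
        rw [h] at hkG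
        simp at hkG
        exact hn hkG
      obtain ⟨k', hk'⟩ := Nat.exists_eq_succ_of_ne_zero hk0
      have hkm : n + k' * e ∉ G := Nat.find_min hK (by rw [← hkdef]; omega)
      have harr : (k' + 1) * e = k' * e + e := by ring
      have hwG : n + k' * e + e ∈ G := by
        rw [hk'] at hkG; rw [harr] at hkG; rwa [← add_assoc] at hkG
      have hwAp' : n + k' * e + e ∈ G ∧ ¬ ∃ y ∈ G, y + e = n + k' * e + e := by
        refine ⟨hwG, ?_⟩
        rintro ⟨y, hy, hye⟩
        have : y = n + k' * e := by omega
        exact hkm (this ▸ hy)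
      obtain ⟨i, hi⟩ := (hrange _).mp hwAp'
      obtain ⟨j, hj⟩ := hcomp i
      have h2 := hle i
      have h3 : f - n = ω j + k' * e := by omega
      rw [h3]
      exact hmul k' _ (hwAp j).1
    intro z
    constructor
    · rintro ⟨x, hx, rfl⟩
      rintro ⟨y, hy, hyz⟩
      have hyx : y + x = f := by omega
      exact hf (hyx ▸ hadd y hy x hx)
    · intro hne
      have hz0 : 0 ≤ z := by
        by_contra h
        push_neg at h
        exact hne ⟨(f - z).toNat, hfro _ (by omega), by omega⟩
      by_cases hnG : z.toNat ∈ G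
      · exact ⟨z.toNat, hnG, by omega⟩
      · exfalso
        have hnf : z.toNat ≤ f := by
          by_contra h
          exact hnG (hfro _ (by omega))
        exact hne ⟨f - z.toNat, hkey _ hnG, by omega⟩
end

section
/- Let G be a symmetric numerical semigroup with minimal generators n₁ < ⋯ < n_d and Frobenius number f. Then ord_G(f + n₁) = max{ord_G(w) : w ∈ Ap(G, n₁)}; that is, the maximum of ord_G over the Apéry set with respect to n₁ is attained at its largest element f + n₁. -/
theorem stmt_5 (d : ℕ) (hd : 0 < d) (n : Fin d → ℕ)
    (hpos : ∀ i, 0 < n i) (hmono : StrictMono n)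
    (hmin : MinimallyGenerated d n)
    (f : ℕ) (hfnot : f ∉ semigroupGen d n)
    (hfro : ∀ m : ℕ, f < m → m ∈ semigroupGen d n)
    (hsym : IsSymmetricWith d n f)
    (o : ℕ) (ho : IsGreatest (repLengths d n (f + n ⟨0, hd⟩)) o) :
    f + n ⟨0, hd⟩ ∈ aperySet d n (n ⟨0, hd⟩) ∧
      IsGreatest {s | ∃ w ∈ aperySet d n (n ⟨0, hd⟩),
        IsGreatest (repLengths d n w) s} o := by

  set e := n ⟨0, hd⟩ with he
  have hepos : 0 < e := hpos _
  have hAp : f + e ∈ aperySet d n e := by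
    refine ⟨hfro _ (by omega), ?_⟩
    rintro ⟨y, hy, hye⟩
    have hyf : y = f := by omega
    exact hfnot (hyf ▸ hy)
  refine ⟨hAp, ⟨f + e, hAp, ho⟩, ?_⟩
  rintro s ⟨w, hw, hws⟩
  obtain ⟨a, haw, has⟩ := hws.1
  have hwle : w ≤ f + e := by
    by_contra h
    push_neg at h
    exact hw.2 ⟨w - e, hfro _ (by omega), by omega⟩
  have h1 : ¬ memZ d n ((w : ℤ) - e) := by
    rintro ⟨x, hx, hxe⟩
    exact hw.2 ⟨x, hx, by omega⟩
  have h2 : memZ d n ((f : ℤ) + e - w) := by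
    rw [hsym]
    intro h
    apply h1
    have : (f : ℤ) - ((f : ℤ) + e - w) = (w : ℤ) - e := by ring
    rwa [this] at h
  obtain ⟨x, ⟨b, hbx⟩, hxe⟩ := h2
  have hxw : x + w = f + e := by omega
  have hmem : s + ∑ i, b i ∈ repLengths d n (f + e) := by
    refine ⟨a + b, ?_, ?_⟩
    · have : ∑ i, (a + b) i * n i = (∑ i, a i * n i) + ∑ i, b i * n i := by
        rw [← Finset.sum_add_distrib]
        exact Finset.sum_congr rfl (fun i _ => by simp [add_mul])
      rw [this, haw, hbx]
      omega
    · rw [← has, ← Finset.sum_add_distrib]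
      exact Finset.sum_congr rfl (fun i _ => rfl)
  have := ho.2 hmem
  omega
end

section
/- Let G be a numerical semigroup minimally generated by n₁ < n₂ < n₃, and for each i let αᵢ = min{α ∈ ℕ : α·nᵢ lies in the semigroup generated by the other two generators}. Assume α₂·n₂ = α₃·n₃. Then the element z = (α₁ − 1)n₁ + (α₃ − 1)n₃ has a unique representation as a nonnegative integer combination of n₁, n₂, n₃; namely, z = a·n₁ + b·n₂ + c·n₃ with a, b, c ∈ ℕ₀ forces a = α₁ − 1, b = 0, c = α₃ − 1. -/
theorem stmt_7 (n1 n2 n3 : ℕ) (h1 : 0 < n1) (h12 : n1 < n2) (h23 : n2 < n3)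
    (hgcd : Nat.gcd (Nat.gcd n1 n2) n3 = 1)
    (hmin1 : ¬ ∃ b c : ℕ, b * n2 + c * n3 = n1)
    (hmin2 : ¬ ∃ a c : ℕ, a * n1 + c * n3 = n2)
    (hmin3 : ¬ ∃ a b : ℕ, a * n1 + b * n2 = n3)
    (α1 α2 α3 : ℕ)
    (hα1 : IsLeast {α : ℕ | 0 < α ∧ ∃ b c : ℕ, α * n1 = b * n2 + c * n3} α1)
    (hα2 : IsLeast {α : ℕ | 0 < α ∧ ∃ a c : ℕ, α * n2 = a * n1 + c * n3} α2)
    (hα3 : IsLeast {α : ℕ | 0 < α ∧ ∃ a b : ℕ, α * n3 = a * n1 + b * n2} α3)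
    (hrel : α2 * n2 = α3 * n3) :
    ∀ a b c : ℕ, a * n1 + b * n2 + c * n3 = (α1 - 1) * n1 + (α3 - 1) * n3 →
      a = α1 - 1 ∧ b = 0 ∧ c = α3 - 1 := by
  obtain ⟨⟨hα1pos, b1, c1, hα1eq⟩, hα1min⟩ := hα1
  obtain ⟨⟨hα2pos, a2, c2, hα2eq⟩, hα2min⟩ := hα2
  obtain ⟨⟨hα3pos, a3, b3, hα3eq⟩, hα3min⟩ := hα3
  intro a b c h
  obtain ⟨A, rfl⟩ : ∃ A, α1 = A + 1 := ⟨α1 - 1, by omega⟩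
  obtain ⟨C, rfl⟩ : ∃ C, α3 = C + 1 := ⟨α3 - 1, by omega⟩
  simp only [Nat.add_sub_cancel] at h ⊢
  have hn3 : 0 < n3 := by omega
  rcases lt_trichotomy a A with hlt | heq | hgt
  · -- a < A : contradicts minimality of α1
    exfalso
    obtain ⟨t, rfl⟩ : ∃ t, A = a + (t + 1) := ⟨A - a - 1, by omega⟩
    have h' : b * n2 + c * n3 = (t + 1) * n1 + C * n3 := by
      zify at h ⊢; linear_combination h
    rcases le_or_gt C c with hc | hc
    · obtain ⟨u, rfl⟩ : ∃ u, c = C + u := ⟨c - C, by omega⟩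
      have h'' : (t + 1) * n1 = b * n2 + u * n3 := by
        zify at h' ⊢; linear_combination - h'
      have := hα1min ⟨by omega, b, u, h''⟩
      omega
    · obtain ⟨k, rfl⟩ : ∃ k, C = c + (k + 1) := ⟨C - c - 1, by omega⟩
      have h'' : b * n2 = (t + 1) * n1 + (k + 1) * n3 := by
        zify at h' ⊢; linear_combination h'
      have hb : 0 < b := by
        rcases Nat.eq_zero_or_pos b with rfl | hb
        · rw [zero_mul] at h''
          exact absurd h''.symm
            (by positivity : (0:ℕ) < (t + 1) * n1 + (k + 1) * n3).ne'
        · exact hb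
      have hble : α2 ≤ b := hα2min ⟨hb, t + 1, k + 1, h''⟩
      obtain ⟨r, rfl⟩ : ∃ r, b = α2 + r := ⟨b - α2, by omega⟩
      have h''' : (t + 1) * n1 = r * n2 + (c + 1) * n3 := by
        zify at h'' hrel ⊢; linear_combination hrel - h''
      have := hα1min ⟨by omega, r, c + 1, h'''⟩
      omega
  · -- a = A : show b = 0, c = C
    subst heq
    have h' : b * n2 + c * n3 = C * n3 := by
      zify at h ⊢; linear_combination h
    rcases Nat.eq_zero_or_pos b with rfl | hb
    · have hcC : c * n3 = C * n3 := by
        zify at h' ⊢; linear_combination h'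
      exact ⟨rfl, rfl, Nat.eq_of_mul_eq_mul_right hn3 hcC⟩
    · exfalso
      have hbn : 0 < b * n2 := Nat.mul_pos hb (by omega)
      have hcC : c * n3 < C * n3 := by omega
      have hc : c < C := lt_of_mul_lt_mul_right hcC (Nat.zero_le n3)
      obtain ⟨k, rfl⟩ : ∃ k, C = c + (k + 1) := ⟨C - c - 1, by omega⟩
      have h'' : b * n2 = (k + 1) * n3 := by
        zify at h' ⊢; linear_combination h'
      have hble : α2 ≤ b := hα2min ⟨hb, 0, k + 1, by rw [h'']; ring⟩
      have hchain : (c + (k + 1) + 1) * n3 ≤ (k + 1) * n3 := by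
        calc (c + (k + 1) + 1) * n3 = α2 * n2 := hrel.symm
          _ ≤ b * n2 := Nat.mul_le_mul_right _ hble
          _ = (k + 1) * n3 := h''
      have := Nat.le_of_mul_le_mul_right hchain hn3
      omega
  · -- a > A : contradicts minimality of α3
    exfalso
    obtain ⟨s, rfl⟩ : ∃ s, a = A + (s + 1) := ⟨a - A - 1, by omega⟩
    have h' : (s + 1) * n1 + b * n2 + c * n3 = C * n3 := by
      zify at h ⊢; linear_combination h
    rcases le_or_gt C c with hc | hc
    · obtain ⟨u, rfl⟩ : ∃ u, c = C + u := ⟨c - C, by omega⟩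
      have h'' : (s + 1) * n1 + b * n2 + u * n3 = 0 := by
        zify at h' ⊢; linear_combination h'
      exact absurd h''
        (by positivity : (0:ℕ) < (s + 1) * n1 + b * n2 + u * n3).ne'
    · obtain ⟨k, rfl⟩ : ∃ k, C = c + (k + 1) := ⟨C - c - 1, by omega⟩
      have h'' : (k + 1) * n3 = (s + 1) * n1 + b * n2 := by
        zify at h' ⊢; linear_combination - h'
      have := hα3min ⟨by omega, s + 1, b, h''⟩
      omega
end

section
/- Let G be a numerical semigroup minimally generated by n₁ < n₂ < n₃ with α₁·n₁ = α₁₂·n₂ + α₁₃·n₃, where α₁ = min{α : α·n₁ ∈ ⟨n₂, n₃⟩} and α₁₂, α₁₃ ∈ ℕ₀. Let α₂ = min{α : α·n₂ ∈ ⟨n₁, n₃⟩} and α₃ = min{α : α·n₃ ∈ ⟨n₁, n₂⟩}. Then the element (α₂ − 1)n₂ + (α₁₃ − 1)n₃ belongs to the Apéry set Ap(G, n₁); that is, it cannot be written as a·n₁ + b·n₂ + c·n₃ with a, b, c ∈ ℕ₀ and a > 0. -/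
/-- The numerical semigroup generated by `n1, n2, n3`. -/
def gen3 (n1 n2 n3 : ℕ) : Set ℕ :=
  {z | ∃ a b c : ℕ, a * n1 + b * n2 + c * n3 = z}

theorem stmt_8 (n1 n2 n3 : ℕ) (h1 : 0 < n1) (h12 : n1 < n2) (h23 : n2 < n3)
    (hgcd : Nat.gcd (Nat.gcd n1 n2) n3 = 1)
    (hmin1 : ¬ ∃ b c : ℕ, b * n2 + c * n3 = n1)
    (hmin2 : ¬ ∃ a c : ℕ, a * n1 + c * n3 = n2)
    (hmin3 : ¬ ∃ a b : ℕ, a * n1 + b * n2 = n3)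
    (α1 α2 α3 α12 α13 : ℕ)
    (hα1 : IsLeast {α : ℕ | 0 < α ∧ ∃ b c : ℕ, α * n1 = b * n2 + c * n3} α1)
    (hα2 : IsLeast {α : ℕ | 0 < α ∧ ∃ a c : ℕ, α * n2 = a * n1 + c * n3} α2)
    (hα3 : IsLeast {α : ℕ | 0 < α ∧ ∃ a b : ℕ, α * n3 = a * n1 + b * n2} α3)
    (hrel : α1 * n1 = α12 * n2 + α13 * n3) (h13 : 1 ≤ α13) :
    ((α2 - 1) * n2 + (α13 - 1) * n3 ∈ gen3 n1 n2 n3) ∧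
      ¬ ∃ a b c : ℕ, 0 < a ∧
        a * n1 + b * n2 + c * n3 = (α2 - 1) * n2 + (α13 - 1) * n3 := by
  obtain ⟨⟨hα2pos, a21, a23, hrel2⟩, hα2min⟩ := hα2
  have hn3 : 0 < n3 := by omega
  constructor
  · exact ⟨0, α2 - 1, α13 - 1, by ring⟩
  · rintro ⟨a, b, c, ha, heq⟩
    -- reduce b modulo α2
    set q := b / α2 with hq
    set r := b % α2 with hr'
    have hrlt : r < α2 := Nat.mod_lt _ hα2pos
    have hbdecomp : α2 * q + r = b := Nat.div_add_mod b α2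
    set a' := a + q * a21 with ha'def
    set c' := c + q * a23 with hc'def
    have heq' : a' * n1 + r * n2 + c' * n3 = (α2 - 1) * n2 + (α13 - 1) * n3 := by
      calc a' * n1 + r * n2 + c' * n3
          = a * n1 + (q * (a21 * n1 + a23 * n3) + r * n2) + c * n3 := by
            rw [ha'def, hc'def]; ring
        _ = a * n1 + (q * (α2 * n2) + r * n2) + c * n3 := by rw [← hrel2]
        _ = a * n1 + (α2 * q + r) * n2 + c * n3 := by ring
        _ = a * n1 + b * n2 + c * n3 := by rw [hbdecomp]
        _ = (α2 - 1) * n2 + (α13 - 1) * n3 := heq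
    have ha'pos : 0 < a' := Nat.lt_of_lt_of_le ha (Nat.le_add_right _ _)
    obtain ⟨k, hk⟩ : ∃ k, α2 - 1 = r + k := ⟨α2 - 1 - r, by omega⟩
    have hkle : k ≤ α2 - 1 := by omega
    by_cases hc : α13 ≤ c'
    · obtain ⟨d, hd⟩ : ∃ d, c' = (α13 - 1) + (d + 1) := ⟨c' - α13, by omega⟩
      have h2 : a' * n1 + r * n2 + ((α13 - 1) + (d + 1)) * n3
          = (r + k) * n2 + (α13 - 1) * n3 := by rw [← hd, ← hk]; exact heq'
      have h3 : (a' * n1 + (d + 1) * n3) + (r * n2 + (α13 - 1) * n3)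
          = k * n2 + (r * n2 + (α13 - 1) * n3) := by
        calc (a' * n1 + (d + 1) * n3) + (r * n2 + (α13 - 1) * n3)
            = a' * n1 + r * n2 + ((α13 - 1) + (d + 1)) * n3 := by ring
          _ = (r + k) * n2 + (α13 - 1) * n3 := h2
          _ = k * n2 + (r * n2 + (α13 - 1) * n3) := by ring
      have hkey : a' * n1 + (d + 1) * n3 = k * n2 := Nat.add_right_cancel h3
      have hkpos : 0 < k := by
        rcases Nat.eq_zero_or_pos k with h | h
        · exfalso
          rw [h, Nat.zero_mul] at hkey
          have : 0 < a' * n1 := Nat.mul_pos ha'pos h1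
          omega
        · exact h
      have := hα2min ⟨hkpos, a', d + 1, hkey.symm⟩
      omega
    · push_neg at hc
      obtain ⟨e, he⟩ : ∃ e, α13 - 1 = c' + e := ⟨α13 - 1 - c', by omega⟩
      have h2 : a' * n1 + r * n2 + c' * n3 = (r + k) * n2 + (c' + e) * n3 := by
        rw [← hk, ← he]; exact heq'
      have h3 : a' * n1 + (r * n2 + c' * n3)
          = (k * n2 + e * n3) + (r * n2 + c' * n3) := by
        calc a' * n1 + (r * n2 + c' * n3)
            = a' * n1 + r * n2 + c' * n3 := by ring
          _ = (r + k) * n2 + (c' + e) * n3 := h2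
          _ = (k * n2 + e * n3) + (r * n2 + c' * n3) := by ring
      have hkey : a' * n1 = k * n2 + e * n3 := Nat.add_right_cancel h3
      have hα1le : α1 ≤ a' := hα1.2 ⟨ha'pos, k, e, hkey⟩
      obtain ⟨s, hs⟩ : ∃ s, a' = α1 + s := ⟨a' - α1, by omega⟩
      have h4 : s * n1 + (α12 * n2 + α13 * n3) = k * n2 + e * n3 := by
        calc s * n1 + (α12 * n2 + α13 * n3)
            = s * n1 + α1 * n1 := by rw [hrel]
          _ = (α1 + s) * n1 := by ring
          _ = a' * n1 := by rw [← hs]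
          _ = k * n2 + e * n3 := hkey
      have hα13e : α13 = e + (c' + 1) := by omega
      have h5 : (s * n1 + α12 * n2 + (c' + 1) * n3) + e * n3 = k * n2 + e * n3 := by
        calc (s * n1 + α12 * n2 + (c' + 1) * n3) + e * n3
            = s * n1 + (α12 * n2 + (e + (c' + 1)) * n3) := by ring
          _ = s * n1 + (α12 * n2 + α13 * n3) := by rw [← hα13e]
          _ = k * n2 + e * n3 := h4
      have h6 : s * n1 + α12 * n2 + (c' + 1) * n3 = k * n2 := Nat.add_right_cancel h5
      have h7 : α12 * n2 < k * n2 := by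
        calc α12 * n2 < α12 * n2 + (s * n1 + (c' + 1) * n3) := by
              have : 0 < (c' + 1) * n3 := Nat.mul_pos (Nat.succ_pos _) hn3
              omega
          _ = s * n1 + α12 * n2 + (c' + 1) * n3 := by ring
          _ = k * n2 := h6
      have hα12k : α12 < k := lt_of_mul_lt_mul_right h7 (Nat.zero_le n2)
      obtain ⟨m, hm⟩ : ∃ m, k = α12 + (m + 1) := ⟨k - α12 - 1, by omega⟩
      have h8 : (s * n1 + (c' + 1) * n3) + α12 * n2 = (m + 1) * n2 + α12 * n2 := by
        calc (s * n1 + (c' + 1) * n3) + α12 * n2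
            = s * n1 + α12 * n2 + (c' + 1) * n3 := by ring
          _ = k * n2 := h6
          _ = (m + 1) * n2 + α12 * n2 := by rw [hm]; ring
      have h9 : s * n1 + (c' + 1) * n3 = (m + 1) * n2 := Nat.add_right_cancel h8
      have := hα2min ⟨Nat.succ_pos m, s, c' + 1, h9.symm⟩
      omega
end

section
/- Let G be a numerical semigroup minimally generated by n₁ < ⋯ < n_d. Define s = max{ord_G(w) : w ∈ Ap(G, n₁)}. Then s = min{k ∈ ℕ₀ : for every z ∈ G with ord_G(z) ≥ k + 1, one has z − n₁ ∈ G}. (This is the statement that the index of nilpotency of the maximal ideal with respect to the principal reduction (t^{n₁}) equals the maximal order on the Apéry set.) -/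
theorem stmt_9 (d : ℕ) (hd : 0 < d) (n : Fin d → ℕ)
    (hpos : ∀ i, 0 < n i) (hmono : StrictMono n)
    (hmin : MinimallyGenerated d n)
    (f : ℕ) (hfnot : f ∉ semigroupGen d n)
    (hfro : ∀ m : ℕ, f < m → m ∈ semigroupGen d n)
    (s : ℕ)
    (hs : IsGreatest {s' | ∃ w ∈ aperySet d n (n ⟨0, hd⟩),
            IsGreatest (repLengths d n w) s'} s) :
    IsLeast {k : ℕ | ∀ z ∈ semigroupGen d n, ∀ a : Fin d → ℕ,
        (∑ i, a i * n i = z) → k + 1 ≤ ∑ i, a i →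
        ∃ y ∈ semigroupGen d n, y + n ⟨0, hd⟩ = z} s := by
  constructor
  · intro z hz a ha hlen
    by_contra h
    have hap : z ∈ aperySet d n (n ⟨0, hd⟩) := ⟨hz, h⟩
    have hbdd : BddAbove (repLengths d n z) := ⟨z, fun m hm => by
      obtain ⟨b, hb1, hb2⟩ := hm
      calc m = ∑ i, b i := hb2.symm
        _ ≤ ∑ i, b i * n i := Finset.sum_le_sum fun i _ =>
            Nat.le_mul_of_pos_right _ (hpos i)
        _ = z := hb1⟩
    have hne : (repLengths d n z).Nonempty := ⟨∑ i, a i, a, ha, rfl⟩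
    have hmem := Nat.sSup_mem hne hbdd
    have hgr : IsGreatest (repLengths d n z) (sSup (repLengths d n z)) :=
      ⟨hmem, fun m hm => le_csSup hbdd hm⟩
    have h1 : sSup (repLengths d n z) ≤ s := hs.2 ⟨z, hap, hgr⟩
    have h2 : s + 1 ≤ sSup (repLengths d n z) :=
      le_trans hlen (hgr.2 ⟨a, ha, rfl⟩)
    omega
  · intro k hk
    obtain ⟨w, hw, hgr⟩ := hs.1
    by_contra hks
    push_neg at hks
    obtain ⟨a, ha, hlen⟩ := hgr.1
    have := hk w hw.1 a ha (by rw [hlen]; omega)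
    exact hw.2 this
end

section
/- Let k be a field. In k[x, y, z], let a, b, c, b', c', α, β, γ be natural numbers with 0 < b' < b, 0 < c' < c, 0 < α < a, 0 ≤ β < b − b', and 0 ≤ γ < c − c'. Then the ideal quotient (x^a − y^{b'}z^{c'}, y^b, z^c) : (x^α y^β z^γ) equals the ideal (x^a − y^{b'}z^{c'}, y^{b−β}, z^{c−γ}, x^{a−α}y^{b−b'−β}, x^{a−α}z^{c−c'−γ}). -/
open MvPolynomial

namespace Stmt11Aux

/-- The monomial `x^i y^j z^l`. -/
noncomputable def Mo (k : Type*) [Field k] (i j l : ℕ) : MvPolynomial (Fin 3) k :=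
  X 0 ^ i * X 1 ^ j * X 2 ^ l

variable {k : Type*} [Field k]

lemma Mo_mul (i j l i' j' l' : ℕ) :
    (Mo k i j l) * (Mo k i' j' l') = Mo k (i + i') (j + j') (l + l') := by
  simp only [Mo, pow_add]; ring

/-- Exponent finsupp for `x^i y^j z^l`. -/
noncomputable def e (i j l : ℕ) : Fin 3 →₀ ℕ :=
  Finsupp.single 0 i + Finsupp.single 1 j + Finsupp.single 2 l

lemma e0 (i j l : ℕ) : e i j l 0 = i := by
  simp [e, Finsupp.single_apply]

lemma e1 (i j l : ℕ) : e i j l 1 = j := by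
  simp [e, Finsupp.single_apply]

lemma e2 (i j l : ℕ) : e i j l 2 = l := by
  simp [e, Finsupp.single_apply]

lemma d_decomp (d : Fin 3 →₀ ℕ) : d = e (d 0) (d 1) (d 2) := by
  ext s
  fin_cases s <;> simp [e, Finsupp.single_apply]

lemma monomial_e (i j l : ℕ) : monomial (e i j l) (1 : k) = Mo k i j l := by
  simp [Mo, e, X_pow_eq_monomial, monomial_mul]

lemma mono_smul (d : Fin 3 →₀ ℕ) (r : k) :
    (monomial d r : MvPolynomial (Fin 3) k) = r • Mo k (d 0) (d 1) (d 2) := by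
  rw [← monomial_e, smul_monomial, smul_eq_mul, mul_one]
  conv_lhs => rw [d_decomp d]

/-- Normal form of the monomial with exponents `(i, j, l)` modulo
`(x^a - y^{b'} z^{c'}, y^b, z^c)`. -/
noncomputable def nfv (k : Type*) [Field k] (a b c b' c' i j l : ℕ) :
    MvPolynomial (Fin 3) k :=
  if j + i / a * b' < b ∧ l + i / a * c' < c then
    Mo k (i % a) (j + i / a * b') (l + i / a * c')
  else 0

/-- Linear "normal form" projection. -/
noncomputable def piL (k : Type*) [Field k] (a b c b' c' : ℕ) :
    MvPolynomial (Fin 3) k →ₗ[k] MvPolynomial (Fin 3) k :=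
  (basisMonomials (Fin 3) k).constr ℕ fun d => nfv k a b c b' c' (d 0) (d 1) (d 2)

lemma piL_monomial (a b c b' c' : ℕ) (d : Fin 3 →₀ ℕ) (r : k) :
    piL k a b c b' c' (monomial d r) = r • nfv k a b c b' c' (d 0) (d 1) (d 2) := by
  have h1 : (monomial d r : MvPolynomial (Fin 3) k) = r • monomial d 1 := by
    rw [smul_monomial, smul_eq_mul, mul_one]
  rw [h1, map_smul]
  congr 1
  have h2 := Module.Basis.constr_basis (basisMonomials (Fin 3) k) ℕ
    (fun d => nfv k a b c b' c' (d 0) (d 1) (d 2)) d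
  simpa [piL] using h2

lemma piL_M (a b c b' c' i j l : ℕ) :
    piL k a b c b' c' (Mo k i j l) = nfv k a b c b' c' i j l := by
  rw [← monomial_e, piL_monomial, e0, e1, e2, one_smul]

/-- The partial inverse map on monomials. -/
noncomputable def phiv (k : Type*) [Field k] (a b c b' c' α β γ i j l : ℕ) :
    MvPolynomial (Fin 3) k :=
  if α ≤ i ∧ β ≤ j ∧ γ ≤ l ∧ i < a ∧ j < b ∧ l < c then Mo k (i - α) (j - β) (l - γ)
  else if i < α ∧ β + b' ≤ j ∧ γ + c' ≤ l ∧ j < b ∧ l < c then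
    Mo k (i + a - α) (j - β - b') (l - γ - c')
  else 0

noncomputable def PhiL (k : Type*) [Field k] (a b c b' c' α β γ : ℕ) :
    MvPolynomial (Fin 3) k →ₗ[k] MvPolynomial (Fin 3) k :=
  (basisMonomials (Fin 3) k).constr ℕ fun d =>
    phiv k a b c b' c' α β γ (d 0) (d 1) (d 2)

lemma PhiL_M (a b c b' c' α β γ i j l : ℕ) :
    PhiL k a b c b' c' α β γ (Mo k i j l) = phiv k a b c b' c' α β γ i j l := by
  rw [← monomial_e]
  have h1 : (monomial (e i j l) (1:k)) = (1:k) • monomial (e i j l) 1 := by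
    rw [one_smul]
  rw [h1, map_smul]
  have h2 := Module.Basis.constr_basis (basisMonomials (Fin 3) k) ℕ
    (fun d => phiv k a b c b' c' α β γ (d 0) (d 1) (d 2)) (e i j l)
  simp only [coe_basisMonomials] at h2
  rw [show (PhiL k a b c b' c' α β γ) (monomial (e i j l) 1) =
    phiv k a b c b' c' α β γ (e i j l 0) (e i j l 1) (e i j l 2) from h2,
    e0, e1, e2, one_smul]

/-- The ideal `I`. -/
noncomputable def Ik (k : Type*) [Field k] (a b c b' c' : ℕ) :
    Ideal (MvPolynomial (Fin 3) k) :=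
  Ideal.span {X 0 ^ a - X 1 ^ b' * X 2 ^ c', X 1 ^ b, X 2 ^ c}

/-- The ideal `J`. -/
noncomputable def Jk (k : Type*) [Field k] (a b c b' c' α β γ : ℕ) :
    Ideal (MvPolynomial (Fin 3) k) :=
  Ideal.span {X 0 ^ a - X 1 ^ b' * X 2 ^ c', X 1 ^ (b - β), X 2 ^ (c - γ),
    X 0 ^ (a - α) * X 1 ^ (b - b' - β), X 0 ^ (a - α) * X 2 ^ (c - c' - γ)}

lemma f_mem_I (a b c b' c' : ℕ) :
    (X 0 ^ a - X 1 ^ b' * X 2 ^ c' : MvPolynomial (Fin 3) k) ∈ Ik k a b c b' c' :=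
  Ideal.subset_span (by simp)

lemma yb_mem_I (a b c b' c' : ℕ) :
    (X 1 ^ b : MvPolynomial (Fin 3) k) ∈ Ik k a b c b' c' :=
  Ideal.subset_span (by simp)

lemma zc_mem_I (a b c b' c' : ℕ) :
    (X 2 ^ c : MvPolynomial (Fin 3) k) ∈ Ik k a b c b' c' :=
  Ideal.subset_span (by simp)

lemma Mo_mem_left {T : Ideal (MvPolynomial (Fin 3) k)} {i' j' l' : ℕ}
    (h : Mo k i' j' l' ∈ T) {i j l : ℕ} (hi : i' ≤ i) (hj : j' ≤ j) (hl : l' ≤ l) :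
    Mo k i j l ∈ T := by
  have key : Mo k i j l = Mo k (i - i') (j - j') (l - l') * Mo k i' j' l' := by
    rw [Mo_mul, Nat.sub_add_cancel hi, Nat.sub_add_cancel hj, Nat.sub_add_cancel hl]
  rw [key]
  exact Ideal.mul_mem_left _ _ h

lemma Mo_y (n : ℕ) : Mo k 0 n 0 = X 1 ^ n := by simp [Mo]

lemma Mo_z (n : ℕ) : Mo k 0 0 n = X 2 ^ n := by simp [Mo]

lemma Mo_xy (m n : ℕ) : Mo k m n 0 = X 0 ^ m * X 1 ^ n := by simp [Mo]

lemma Mo_xz (m n : ℕ) : Mo k m 0 n = X 0 ^ m * X 2 ^ n := by simp [Mo]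

lemma y_mem_J (a b c b' c' α β γ : ℕ) :
    Mo k 0 (b - β) 0 ∈ Jk k a b c b' c' α β γ := by
  rw [Mo_y]; exact Ideal.subset_span (by simp)

lemma z_mem_J (a b c b' c' α β γ : ℕ) :
    Mo k 0 0 (c - γ) ∈ Jk k a b c b' c' α β γ := by
  rw [Mo_z]; exact Ideal.subset_span (by simp)

lemma xy_mem_J (a b c b' c' α β γ : ℕ) :
    Mo k (a - α) (b - b' - β) 0 ∈ Jk k a b c b' c' α β γ := by
  rw [Mo_xy]; exact Ideal.subset_span (by simp)

lemma xz_mem_J (a b c b' c' α β γ : ℕ) :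
    Mo k (a - α) 0 (c - c' - γ) ∈ Jk k a b c b' c' α β γ := by
  rw [Mo_xz]; exact Ideal.subset_span (by simp)

lemma f_mem_J (a b c b' c' α β γ : ℕ) :
    (X 0 ^ a - X 1 ^ b' * X 2 ^ c' : MvPolynomial (Fin 3) k) ∈ Jk k a b c b' c' α β γ :=
  Ideal.subset_span (by simp)

/-- Key step: `x^{aq+r} y^j z^l ≡ x^r y^{j+qb'} z^{l+qc'}` mod `I`. -/
lemma step_pow (a b c b' c' : ℕ) (q r j l : ℕ) :
    Mo k (a * q + r) j l - Mo k r (j + q * b') (l + q * c') ∈ Ik k a b c b' c' := by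
  obtain ⟨t, ht⟩ := sub_dvd_pow_sub_pow (X 0 ^ a : MvPolynomial (Fin 3) k)
    (X 1 ^ b' * X 2 ^ c') q
  have hident : Mo k (a * q + r) j l - Mo k r (j + q * b') (l + q * c') =
      (Mo k r j l * t) * (X 0 ^ a - X 1 ^ b' * X 2 ^ c') := by
    have e1 : Mo k (a * q + r) j l = Mo k r j l * (X 0 ^ a) ^ q := by
      simp only [Mo, pow_add, pow_mul]; ring
    have e2 : Mo k r (j + q * b') (l + q * c') =
        Mo k r j l * (X 1 ^ b' * X 2 ^ c') ^ q := by
      simp only [Mo, pow_add, pow_mul, mul_pow]; ring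
    rw [e1, e2, ← mul_sub, ht]; ring
  rw [hident]
  exact Ideal.mul_mem_left _ _ (f_mem_I a b c b' c')

lemma sub_nfv_mem (a b c b' c' : ℕ) (ha : 0 < a) (i j l : ℕ) :
    Mo k i j l - nfv k a b c b' c' i j l ∈ Ik k a b c b' c' := by
  have hi : a * (i / a) + i % a = i := Nat.div_add_mod i a
  have base : Mo k i j l - Mo k (i % a) (j + i / a * b') (l + i / a * c') ∈
      Ik k a b c b' c' := by
    have := step_pow a b c b' c' (i / a) (i % a) j l (k := k)
    rwa [hi] at this
  unfold nfv
  split_ifs with h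
  · exact base
  · rw [sub_zero]
    have hsum : Mo k i j l =
        (Mo k i j l - Mo k (i % a) (j + i / a * b') (l + i / a * c')) +
        Mo k (i % a) (j + i / a * b') (l + i / a * c') := by ring
    rw [hsum]
    refine Ideal.add_mem _ base ?_
    rcases not_and_or.mp h with h' | h'
    · refine Mo_mem_left (by rw [Mo_y]; exact yb_mem_I a b c b' c')
        (Nat.zero_le _) ?_ (Nat.zero_le _)
      omega
    · refine Mo_mem_left (by rw [Mo_z]; exact zc_mem_I a b c b' c')
        (Nat.zero_le _) (Nat.zero_le _) ?_
      omega

lemma piL_Mo_f (a b c b' c' : ℕ) (ha : 0 < a) (i j l : ℕ) :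
    piL k a b c b' c' (Mo k i j l * (X 0 ^ a - X 1 ^ b' * X 2 ^ c')) = 0 := by
  have hid : Mo k i j l * (X 0 ^ a - X 1 ^ b' * X 2 ^ c') =
      Mo k (i + a) j l - Mo k i (j + b') (l + c') := by
    simp only [Mo, pow_add]; ring
  rw [hid, map_sub, piL_M, piL_M]
  unfold nfv
  rw [Nat.add_div_right i ha, Nat.add_mod_right]
  have e1 : j + (i / a + 1) * b' = j + b' + i / a * b' := by ring
  have e2 : l + (i / a + 1) * c' = l + c' + i / a * c' := by ring
  rw [e1, e2, sub_self]

lemma piL_Mo_y (a b c b' c' : ℕ) (i j l : ℕ) :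
    piL k a b c b' c' (Mo k i j l * X 1 ^ b) = 0 := by
  have hid : Mo k i j l * X 1 ^ b = Mo k i (j + b) l := by
    simp only [Mo, pow_add]; ring
  rw [hid, piL_M]
  unfold nfv
  rw [if_neg]
  rintro ⟨h1, -⟩
  exact absurd h1 (Nat.not_lt.mpr ((Nat.le_add_left b j).trans (Nat.le_add_right _ _)))

lemma piL_Mo_z (a b c b' c' : ℕ) (i j l : ℕ) :
    piL k a b c b' c' (Mo k i j l * X 2 ^ c) = 0 := by
  have hid : Mo k i j l * X 2 ^ c = Mo k i j (l + c) := by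
    simp only [Mo, pow_add]; ring
  rw [hid, piL_M]
  unfold nfv
  rw [if_neg]
  rintro ⟨-, h2⟩
  exact absurd h2 (Nat.not_lt.mpr ((Nat.le_add_left c l).trans (Nat.le_add_right _ _)))

lemma piL_mul_zero (a b c b' c' : ℕ) (g : MvPolynomial (Fin 3) k)
    (h : ∀ i j l, piL k a b c b' c' (Mo k i j l * g) = 0) (p : MvPolynomial (Fin 3) k) :
    piL k a b c b' c' (p * g) = 0 := by
  induction p using MvPolynomial.induction_on' with
  | monomial d r =>
    rw [mono_smul d r, smul_mul_assoc, map_smul, h, smul_zero]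
  | add p q hp hq =>
    rw [add_mul, map_add, hp, hq, add_zero]

lemma piL_zero_of_mem_I (a b c b' c' : ℕ) (ha : 0 < a) {p : MvPolynomial (Fin 3) k}
    (hp : p ∈ Ik k a b c b' c') : piL k a b c b' c' p = 0 := by
  rw [Ik, Ideal.mem_span_insert] at hp
  obtain ⟨u1, z1, hz1, rfl⟩ := hp
  rw [Ideal.mem_span_insert] at hz1
  obtain ⟨u2, z2, hz2, rfl⟩ := hz1
  rw [Ideal.mem_span_singleton'] at hz2
  obtain ⟨u3, rfl⟩ := hz2
  rw [map_add, map_add, piL_mul_zero a b c b' c' _ (piL_Mo_f a b c b' c' ha),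
    piL_mul_zero a b c b' c' _ (piL_Mo_y a b c b' c'),
    piL_mul_zero a b c b' c' _ (piL_Mo_z a b c b' c'), add_zero, add_zero]

lemma sub_piL_mem (a b c b' c' : ℕ) (ha : 0 < a) (p : MvPolynomial (Fin 3) k) :
    p - piL k a b c b' c' p ∈ Ik k a b c b' c' := by
  induction p using MvPolynomial.induction_on' with
  | monomial d r =>
    rw [piL_monomial, mono_smul d r, ← smul_sub]
    exact Submodule.smul_of_tower_mem _ r (sub_nfv_mem a b c b' c' ha _ _ _)
  | add p q hp hq =>
    rw [map_add]
    have : p + q - (piL k a b c b' c' p + piL k a b c b' c' q) =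
        (p - piL k a b c b' c' p) + (q - piL k a b c b' c' q) := by ring
    rw [this]
    exact Ideal.add_mem _ hp hq

section Main

variable (a b c b' c' α β γ : ℕ)
variable (hb'0 : 0 < b') (hb'b : b' < b) (hc'0 : 0 < c') (hc'c : c' < c)
variable (hα0 : 0 < α) (hαa : α < a) (hβ : β < b - b') (hγ : γ < c - c')

include hb'0 hb'b hc'0 hc'c hα0 hαa hβ hγ in
lemma box_key (r j1 l1 : ℕ) (hr : r < a) (hj : j1 < b) (hl : l1 < c) :
    Mo k r j1 l1 -
      PhiL k a b c b' c' α β γ (piL k a b c b' c' (Mo k r j1 l1 * Mo k α β γ)) ∈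
      Jk k a b c b' c' α β γ := by
  have ha : 0 < a := lt_trans hα0 hαa
  rw [Mo_mul, piL_M]
  unfold nfv
  by_cases h1 : r + α < a
  · rw [Nat.div_eq_of_lt h1, Nat.mod_eq_of_lt h1]
    simp only [Nat.zero_mul, Nat.add_zero]
    by_cases h2 : j1 + β < b ∧ l1 + γ < c
    · rw [if_pos h2, PhiL_M]
      unfold phiv
      rw [if_pos (by omega)]
      rw [show r + α - α = r from by omega, show j1 + β - β = j1 from by omega,
        show l1 + γ - γ = l1 from by omega, sub_self]
      exact Ideal.zero_mem _
    · rw [if_neg h2, map_zero, sub_zero]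
      rcases not_and_or.mp h2 with h3 | h3
      · exact Mo_mem_left (y_mem_J a b c b' c' α β γ) (Nat.zero_le _) (by omega)
          (Nat.zero_le _)
      · exact Mo_mem_left (z_mem_J a b c b' c' α β γ) (Nat.zero_le _) (Nat.zero_le _)
          (by omega)
  · rw [Nat.div_eq_of_lt_le (show 1 * a ≤ r + α by omega) (show r + α < (1 + 1) * a by omega)]
    have hmod : (r + α) % a = r + α - a := by
      rw [Nat.mod_eq_sub_mod (by omega), Nat.mod_eq_of_lt (by omega)]
    rw [hmod]
    simp only [Nat.one_mul]
    by_cases h2 : j1 + β + b' < b ∧ l1 + γ + c' < c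
    · rw [if_pos h2, PhiL_M]
      unfold phiv
      rw [if_neg (by omega), if_pos (by omega)]
      rw [show r + α - a + a - α = r from by omega,
        show j1 + β + b' - β - b' = j1 from by omega,
        show l1 + γ + c' - γ - c' = l1 from by omega, sub_self]
      exact Ideal.zero_mem _
    · rw [if_neg h2, map_zero, sub_zero]
      rcases not_and_or.mp h2 with h3 | h3
      · exact Mo_mem_left (xy_mem_J a b c b' c' α β γ) (by omega) (by omega)
          (Nat.zero_le _)
      · exact Mo_mem_left (xz_mem_J a b c b' c' α β γ) (by omega) (Nat.zero_le _)
          (by omega)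

include hb'0 hb'b hc'0 hc'c hα0 hαa hβ hγ in
lemma main_key (p : MvPolynomial (Fin 3) k) :
    piL k a b c b' c' p -
      PhiL k a b c b' c' α β γ
        (piL k a b c b' c' (piL k a b c b' c' p * Mo k α β γ)) ∈
      Jk k a b c b' c' α β γ := by
  have ha : 0 < a := lt_trans hα0 hαa
  induction p using MvPolynomial.induction_on' with
  | monomial d r =>
    rw [piL_monomial, smul_mul_assoc, map_smul, map_smul, ← smul_sub]
    refine Submodule.smul_of_tower_mem _ r ?_
    unfold nfv
    by_cases hc : d 1 + d 0 / a * b' < b ∧ d 2 + d 0 / a * c' < c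
    · rw [if_pos hc]
      exact box_key a b c b' c' α β γ hb'0 hb'b hc'0 hc'c hα0 hαa hβ hγ _ _ _
        (Nat.mod_lt _ ha) hc.1 hc.2
    · rw [if_neg hc, zero_mul, map_zero, map_zero, sub_zero]
      exact Ideal.zero_mem _
  | add p q hp hq =>
    rw [map_add, add_mul, map_add, map_add]
    have : piL k a b c b' c' p + piL k a b c b' c' q -
        (PhiL k a b c b' c' α β γ
            (piL k a b c b' c' (piL k a b c b' c' p * Mo k α β γ)) +
          PhiL k a b c b' c' α β γ
            (piL k a b c b' c' (piL k a b c b' c' q * Mo k α β γ))) =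
        (piL k a b c b' c' p -
          PhiL k a b c b' c' α β γ
            (piL k a b c b' c' (piL k a b c b' c' p * Mo k α β γ))) +
        (piL k a b c b' c' q -
          PhiL k a b c b' c' α β γ
            (piL k a b c b' c' (piL k a b c b' c' q * Mo k α β γ))) := by ring
    rw [this]
    exact Ideal.add_mem _ hp hq

end Main

end Stmt11Aux

open Stmt11Aux

theorem stmt_11 (k : Type*) [Field k] (a b c b' c' α β γ : ℕ)
    (hb'0 : 0 < b') (hb'b : b' < b) (hc'0 : 0 < c') (hc'c : c' < c)
    (hα0 : 0 < α) (hαa : α < a) (hβ : β < b - b') (hγ : γ < c - c') :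
    (Ideal.span {X 0 ^ a - X 1 ^ b' * X 2 ^ c', X 1 ^ b, X 2 ^ c} :
        Ideal (MvPolynomial (Fin 3) k)).colon
      ((Ideal.span {X 0 ^ α * X 1 ^ β * X 2 ^ γ} : Ideal (MvPolynomial (Fin 3) k)) :
        Set (MvPolynomial (Fin 3) k)) =
    Ideal.span {X 0 ^ a - X 1 ^ b' * X 2 ^ c', X 1 ^ (b - β), X 2 ^ (c - γ),
      X 0 ^ (a - α) * X 1 ^ (b - b' - β), X 0 ^ (a - α) * X 2 ^ (c - c' - γ)} := by
  have ha : 0 < a := lt_trans hα0 hαa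
  have hIdef : (Ideal.span {X 0 ^ a - X 1 ^ b' * X 2 ^ c', X 1 ^ b, X 2 ^ c} :
      Ideal (MvPolynomial (Fin 3) k)) = Ik k a b c b' c' := rfl
  have hJdef : (Ideal.span {X 0 ^ a - X 1 ^ b' * X 2 ^ c', X 1 ^ (b - β), X 2 ^ (c - γ),
      X 0 ^ (a - α) * X 1 ^ (b - b' - β), X 0 ^ (a - α) * X 2 ^ (c - c' - γ)} :
      Ideal (MvPolynomial (Fin 3) k)) = Jk k a b c b' c' α β γ := rfl
  have hMdef : (X 0 ^ α * X 1 ^ β * X 2 ^ γ : MvPolynomial (Fin 3) k) = Mo k α β γ := rfl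
  rw [hIdef, hJdef, hMdef]
  apply le_antisymm
  · -- hard direction
    intro g hg
    rw [Ideal.mem_colon_span_singleton] at hg
    have h1 : g - piL k a b c b' c' g ∈ Ik k a b c b' c' :=
      sub_piL_mem a b c b' c' ha g
    have h2 : piL k a b c b' c' g * Mo k α β γ ∈ Ik k a b c b' c' := by
      have hrw : piL k a b c b' c' g * Mo k α β γ =
          g * Mo k α β γ - (g - piL k a b c b' c' g) * Mo k α β γ := by ring
      rw [hrw]
      exact Ideal.sub_mem _ hg (Ideal.mul_mem_right _ _ h1)
    have h3 : piL k a b c b' c' (piL k a b c b' c' g * Mo k α β γ) = 0 :=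
      piL_zero_of_mem_I a b c b' c' ha h2
    have h4 := main_key a b c b' c' α β γ hb'0 hb'b hc'0 hc'c hα0 hαa hβ hγ g (k := k)
    rw [h3, map_zero, sub_zero] at h4
    have hIJ : Ik k a b c b' c' ≤ Jk k a b c b' c' α β γ := by
      rw [Ik, Ideal.span_le]
      rintro x hx
      simp only [Set.mem_insert_iff, Set.mem_singleton_iff] at hx
      rcases hx with rfl | rfl | rfl
      · exact f_mem_J a b c b' c' α β γ
      · rw [← Mo_y]
        exact Mo_mem_left (y_mem_J a b c b' c' α β γ) (Nat.zero_le _) (by omega)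
          (Nat.zero_le _)
      · rw [← Mo_z]
        exact Mo_mem_left (z_mem_J a b c b' c' α β γ) (Nat.zero_le _) (Nat.zero_le _)
          (by omega)
    have hsplit : g = (g - piL k a b c b' c' g) + piL k a b c b' c' g := by ring
    rw [hsplit]
    exact Ideal.add_mem _ (hIJ h1) h4
  · -- easy direction
    rw [Jk, Ideal.span_le]
    rintro x hx
    simp only [Set.mem_insert_iff, Set.mem_singleton_iff] at hx
    rw [SetLike.mem_coe]
    rcases hx with rfl | rfl | rfl | rfl | rfl
    · rw [Ideal.mem_colon_span_singleton]
      exact Ideal.mul_mem_right _ _ (f_mem_I a b c b' c')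
    · rw [Ideal.mem_colon_span_singleton]
      have hid : (X 1 ^ (b - β) : MvPolynomial (Fin 3) k) * Mo k α β γ =
          (X 0 ^ α * X 2 ^ γ) * X 1 ^ ((b - β) + β) := by
        simp only [Mo, pow_add]; ring
      rw [hid, show b - β + β = b from by omega]
      exact Ideal.mul_mem_left _ _ (yb_mem_I a b c b' c')
    · rw [Ideal.mem_colon_span_singleton]
      have hid : (X 2 ^ (c - γ) : MvPolynomial (Fin 3) k) * Mo k α β γ =
          (X 0 ^ α * X 1 ^ β) * X 2 ^ ((c - γ) + γ) := by
        simp only [Mo, pow_add]; ring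
      rw [hid, show c - γ + γ = c from by omega]
      exact Ideal.mul_mem_left _ _ (zc_mem_I a b c b' c')
    · rw [Ideal.mem_colon_span_singleton]
      have hid : (X 0 ^ (a - α) * X 1 ^ (b - b' - β) : MvPolynomial (Fin 3) k) *
          Mo k α β γ =
          (X 0 ^ ((a - α) + α) - X 1 ^ b' * X 2 ^ c') * (X 1 ^ ((b - b' - β) + β) * X 2 ^ γ)
            + X 2 ^ (c' + γ) * X 1 ^ (b' + ((b - b' - β) + β)) := by
        simp only [Mo, pow_add]; ring
      rw [hid, show (a - α) + α = a from by omega,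
        show (b - b' - β) + β = b - b' from by omega,
        show b' + (b - b') = b from by omega]
      exact Ideal.add_mem _
        (Ideal.mul_mem_right _ _ (f_mem_I a b c b' c'))
        (Ideal.mul_mem_left _ _ (yb_mem_I a b c b' c'))
    · rw [Ideal.mem_colon_span_singleton]
      have hid : (X 0 ^ (a - α) * X 2 ^ (c - c' - γ) : MvPolynomial (Fin 3) k) *
          Mo k α β γ =
          (X 0 ^ ((a - α) + α) - X 1 ^ b' * X 2 ^ c') * (X 2 ^ ((c - c' - γ) + γ) * X 1 ^ β)
            + X 1 ^ (b' + β) * X 2 ^ (c' + ((c - c' - γ) + γ)) := by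
        simp only [Mo, pow_add]; ring
      rw [hid, show (a - α) + α = a from by omega,
        show (c - c' - γ) + γ = c - c' from by omega,
        show c' + (c - c') = c from by omega]
      exact Ideal.add_mem _
        (Ideal.mul_mem_right _ _ (f_mem_I a b c b' c'))
        (Ideal.mul_mem_left _ _ (zc_mem_I a b c b' c'))
end

section
/- Let k be a field. In k[x, y, z], with natural numbers satisfying 0 < b' < b, 0 < c' < c, 0 < α < a, 0 ≤ β < b − b', 0 ≤ γ < c − c', the intersection (x^a − y^{b'}z^{c'}, y^b, z^c) ∩ (x^α y^β z^γ) equals the ideal generated by x^α y^β z^γ · y^{b−β}, x^α y^β z^γ · z^{c−γ}, x^α y^β z^γ · x^{a−α} y^{b−b'−β}, x^α y^β z^γ · x^{a−α} z^{c−c'−γ}, and x^α y^β z^γ · (x^a − y^{b'}z^{c'}). -/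
open MvPolynomial

namespace Stmt12

noncomputable def e3 (i j l : ℕ) : Fin 3 →₀ ℕ :=
  Finsupp.single 0 i + Finsupp.single 1 j + Finsupp.single 2 l

@[simp] lemma e3_apply0 (i j l : ℕ) : e3 i j l 0 = i := by
  simp [e3, Finsupp.single_apply]

@[simp] lemma e3_apply1 (i j l : ℕ) : e3 i j l 1 = j := by
  simp [e3, Finsupp.single_apply]

@[simp] lemma e3_apply2 (i j l : ℕ) : e3 i j l 2 = l := by
  simp [e3, Finsupp.single_apply]

lemma e3_add (i j l i' j' l' : ℕ) : e3 i j l + e3 i' j' l' = e3 (i+i') (j+j') (l+l') := by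
  ext t; fin_cases t <;> simp

lemma e3_add_single0 (i j l t : ℕ) : e3 i j l + Finsupp.single 0 t = e3 (i+t) j l := by
  ext u; fin_cases u <;> simp [Finsupp.single_apply]

lemma eq_e3 (d : Fin 3 →₀ ℕ) : d = e3 (d 0) (d 1) (d 2) := by
  ext t; fin_cases t <;> simp

lemma e3_inj {i j l i' j' l' : ℕ} (h : e3 i j l = e3 i' j' l') : i = i' ∧ j = j' ∧ l = l' := by
  refine ⟨?_, ?_, ?_⟩
  · have := congrArg (fun f => f 0) h; simpa using this
  · have := congrArg (fun f => f 1) h; simpa using this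
  · have := congrArg (fun f => f 2) h; simpa using this

lemma X_pows_eq {k : Type*} [CommSemiring k] (i j l : ℕ) :
    (X 0 ^ i * X 1 ^ j * X 2 ^ l : MvPolynomial (Fin 3) k) = monomial (e3 i j l) 1 := by
  simp [X_pow_eq_monomial, monomial_mul, e3]

section Defs

/-- normal-form exponent map: divide the x-exponent by a = α+A, push remainders to y,z -/
noncomputable def nf (α A β b' B γ c' C : ℕ) (d : Fin 3 →₀ ℕ) : Fin 3 →₀ ℕ :=
  e3 (d 0 % (α + A)) (d 1 + (d 0 / (α + A)) * b') (d 2 + (d 0 / (α + A)) * c')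

def ok (α A β b' B γ c' C : ℕ) (d : Fin 3 →₀ ℕ) : Prop :=
  d 1 + (d 0 / (α + A)) * b' < β + b' + B ∧ d 2 + (d 0 / (α + A)) * c' < γ + c' + C

instance (α A β b' B γ c' C : ℕ) : DecidablePred (ok α A β b' B γ c' C) := fun d => by unfold ok; infer_instance

def ok2 (α A β b' B γ c' C : ℕ) (d : Fin 3 →₀ ℕ) : Prop :=
  (d 0 < A ∧ d 1 < b' + B ∧ d 2 < c' + C) ∨ (A ≤ d 0 ∧ d 0 < α + A ∧ d 1 < B ∧ d 2 < C)

instance (α A β b' B γ c' C : ℕ) : DecidablePred (ok2 α A β b' B γ c' C) := fun d => by unfold ok2; infer_instance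

noncomputable def NF (α A β b' B γ c' C : ℕ) {k : Type*} [Field k] (p : MvPolynomial (Fin 3) k) : MvPolynomial (Fin 3) k :=
  Finsupp.sum (AddMonoidAlgebra.coeff p) fun d coef =>
    if ok α A β b' B γ c' C d then monomial (nf α A β b' B γ c' C d) coef else 0

noncomputable def DF (α A β b' B γ c' C : ℕ) {k : Type*} [Field k] (p : MvPolynomial (Fin 3) k) : MvPolynomial (Fin 3) k :=
  Finsupp.sum (AddMonoidAlgebra.coeff p) fun d coef =>
    if ok2 α A β b' B γ c' C (nf α A β b' B γ c' C d) then monomial (nf α A β b' B γ c' C d) coef else 0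

noncomputable def phi (α A β b' B γ c' C : ℕ) (d : Fin 3 →₀ ℕ) : Fin 3 →₀ ℕ :=
  if d 0 < A then e3 (α + d 0) (β + d 1) (γ + d 2)
  else e3 (d 0 - A) (β + b' + d 1) (γ + c' + d 2)

variable (α A β b' B γ c' C : ℕ) {k : Type*} [Field k]

lemma NF_add (p q : MvPolynomial (Fin 3) k) :
    NF α A β b' B γ c' C (p + q) = NF α A β b' B γ c' C p + NF α A β b' B γ c' C q := by
  unfold NF
  apply Finsupp.sum_add_index' <;> intro d
  · simp
  · intro c1 c2; split <;> simp

lemma NF_sub (p q : MvPolynomial (Fin 3) k) :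
    NF α A β b' B γ c' C (p - q) = NF α A β b' B γ c' C p - NF α A β b' B γ c' C q := by
  unfold NF
  apply Finsupp.sum_sub_index
  intro d c1 c2; split <;> simp

lemma NF_monomial (d : Fin 3 →₀ ℕ) (c : k) :
    NF α A β b' B γ c' C (monomial d c) =
      if ok α A β b' B γ c' C d then monomial (nf α A β b' B γ c' C d) c else 0 := by
  unfold NF
  rw [← single_eq_monomial, AddMonoidAlgebra.coeff_single, Finsupp.sum_single_index (by split <;> simp)]

lemma DF_add (p q : MvPolynomial (Fin 3) k) :
    DF α A β b' B γ c' C (p + q) = DF α A β b' B γ c' C p + DF α A β b' B γ c' C q := by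
  unfold DF
  apply Finsupp.sum_add_index' <;> intro d
  · simp
  · intro c1 c2; split <;> simp

lemma DF_monomial (d : Fin 3 →₀ ℕ) (c : k) :
    DF α A β b' B γ c' C (monomial d c) =
      if ok2 α A β b' B γ c' C (nf α A β b' B γ c' C d) then monomial (nf α A β b' B γ c' C d) c else 0 := by
  unfold DF
  rw [← single_eq_monomial, AddMonoidAlgebra.coeff_single, Finsupp.sum_single_index (by split <;> simp)]


lemma NF_mul_yb (u : MvPolynomial (Fin 3) k) :
    NF α A β b' B γ c' C (u * X 1 ^ (β + b' + B)) = 0 := by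
  induction u using MvPolynomial.induction_on' with
  | monomial d c =>
    rw [X_pow_eq_monomial, monomial_mul, NF_monomial, if_neg]
    intro h
    have h1 := h.1
    simp [Finsupp.single_apply, Finsupp.add_apply] at h1
    omega
  | add p q hp hq =>
    rw [add_mul, NF_add, hp, hq, add_zero]

lemma NF_mul_zc (u : MvPolynomial (Fin 3) k) :
    NF α A β b' B γ c' C (u * X 2 ^ (γ + c' + C)) = 0 := by
  induction u using MvPolynomial.induction_on' with
  | monomial d c =>
    rw [X_pow_eq_monomial, monomial_mul, NF_monomial, if_neg]
    intro h
    have h2 := h.2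
    simp [Finsupp.single_apply, Finsupp.add_apply] at h2
    omega
  | add p q hp hq =>
    rw [add_mul, NF_add, hp, hq, add_zero]

lemma NF_mul_f (hα : 0 < α) (u : MvPolynomial (Fin 3) k) :
    NF α A β b' B γ c' C (u * (X 0 ^ (α + A) - X 1 ^ b' * X 2 ^ c')) = 0 := by
  have ha : 0 < α + A := by omega
  induction u using MvPolynomial.induction_on' with
  | monomial d c =>
    have e1 : (X 1 ^ b' * X 2 ^ c' : MvPolynomial (Fin 3) k)
        = monomial (Finsupp.single 1 b' + Finsupp.single 2 c') 1 := by
      simp [X_pow_eq_monomial, monomial_mul]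
    rw [mul_sub, X_pow_eq_monomial, e1, monomial_mul, monomial_mul, NF_sub,
      NF_monomial, NF_monomial]
    have c10 : ((d + Finsupp.single 0 (α+A) : Fin 3 →₀ ℕ)) 0 = d 0 + (α+A) := by simp
    have c11 : ((d + Finsupp.single 0 (α+A) : Fin 3 →₀ ℕ)) 1 = d 1 := by simp
    have c12 : ((d + Finsupp.single 0 (α+A) : Fin 3 →₀ ℕ)) 2 = d 2 := by simp
    have c20 : ((d + (Finsupp.single 1 b' + Finsupp.single 2 c') : Fin 3 →₀ ℕ)) 0 = d 0 := by simp
    have c21 : ((d + (Finsupp.single 1 b' + Finsupp.single 2 c') : Fin 3 →₀ ℕ)) 1 = d 1 + b' := by simp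
    have c22 : ((d + (Finsupp.single 1 b' + Finsupp.single 2 c') : Fin 3 →₀ ℕ)) 2 = d 2 + c' := by simp
    have hdiv : (d 0 + (α+A)) / (α+A) = d 0 / (α+A) + 1 := Nat.add_div_right _ ha
    have hmod : (d 0 + (α+A)) % (α+A) = d 0 % (α+A) := Nat.add_mod_right _ _
    have ar1 : d 1 + (d 0 / (α+A) + 1) * b' = d 1 + b' + (d 0/(α+A)) * b' := by ring
    have ar2 : d 2 + (d 0 / (α+A) + 1) * c' = d 2 + c' + (d 0/(α+A)) * c' := by ring
    have hok : ok α A β b' B γ c' C (d + Finsupp.single 0 (α+A)) ↔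
        ok α A β b' B γ c' C (d + (Finsupp.single 1 b' + Finsupp.single 2 c')) := by
      unfold ok
      rw [c10, c11, c12, c20, c21, c22, hdiv, ar1, ar2]
    have hnf : nf α A β b' B γ c' C (d + Finsupp.single 0 (α+A)) =
        nf α A β b' B γ c' C (d + (Finsupp.single 1 b' + Finsupp.single 2 c')) := by
      unfold nf
      rw [c10, c11, c12, c20, c21, c22, hdiv, hmod, ar1, ar2]
    rw [hnf]
    simp only [hok]
    exact sub_self _
  | add p q hp hq =>
    rw [add_mul, NF_add, hp, hq, add_zero]

lemma NF_zero_of_mem (hα : 0 < α)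
    {p : MvPolynomial (Fin 3) k}
    (hp : p ∈ Ideal.span {(X 0 ^ (α + A) - X 1 ^ b' * X 2 ^ c' : MvPolynomial (Fin 3) k),
      X 1 ^ (β + b' + B), X 2 ^ (γ + c' + C)}) :
    NF α A β b' B γ c' C p = 0 := by
  rw [show ({(X 0 ^ (α + A) - X 1 ^ b' * X 2 ^ c' : MvPolynomial (Fin 3) k),
      X 1 ^ (β + b' + B), X 2 ^ (γ + c' + C)} : Set (MvPolynomial (Fin 3) k)) =
      insert (X 0 ^ (α + A) - X 1 ^ b' * X 2 ^ c')
        (insert (X 1 ^ (β + b' + B)) {X 2 ^ (γ + c' + C)}) from rfl] at hp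
  rw [Ideal.mem_span_insert] at hp
  obtain ⟨u, p1, hp1, rfl⟩ := hp
  rw [Ideal.mem_span_insert] at hp1
  obtain ⟨v, p2, hp2, rfl⟩ := hp1
  rw [Ideal.mem_span_singleton'] at hp2
  obtain ⟨w, rfl⟩ := hp2
  rw [NF_add, NF_add, NF_mul_f _ _ _ _ _ _ _ _ hα, NF_mul_yb, NF_mul_zc]
  simp


lemma monomial_eq_mul1 (i j l q : ℕ) (c : k) :
    monomial (e3 i (j+q) l) c = monomial (e3 i j l) c * X 1 ^ q := by
  have he : e3 i j l + Finsupp.single 1 q = e3 i (j+q) l := by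
    ext t; fin_cases t <;> simp [Finsupp.single_apply]
  rw [X_pow_eq_monomial, monomial_mul, mul_one, he]

lemma monomial_eq_mul2 (i j l r : ℕ) (c : k) :
    monomial (e3 i j (l+r)) c = monomial (e3 i j l) c * X 2 ^ r := by
  have he : e3 i j l + Finsupp.single 2 r = e3 i j (l+r) := by
    ext t; fin_cases t <;> simp [Finsupp.single_apply]
  rw [X_pow_eq_monomial, monomial_mul, mul_one, he]

lemma monomial_eq_mul01 (i j l p q : ℕ) (c : k) :
    monomial (e3 (i+p) (j+q) l) c = monomial (e3 i j l) c * (X 0 ^ p * X 1 ^ q) := by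
  have : (X 0 ^ p * X 1 ^ q : MvPolynomial (Fin 3) k) = X 0 ^ p * X 1 ^ q * X 2 ^ 0 := by
    rw [pow_zero, mul_one]
  rw [this, X_pows_eq, monomial_mul, mul_one, e3_add, add_zero]

lemma monomial_eq_mul02 (i j l p r : ℕ) (c : k) :
    monomial (e3 (i+p) j (l+r)) c = monomial (e3 i j l) c * (X 0 ^ p * X 2 ^ r) := by
  have : (X 0 ^ p * X 2 ^ r : MvPolynomial (Fin 3) k) = X 0 ^ p * X 1 ^ 0 * X 2 ^ r := by
    rw [pow_zero, mul_one]
  rw [this, X_pows_eq, monomial_mul, mul_one, e3_add, add_zero]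

/-- telescoping: any monomial is congruent to its normal form mod (f) -/
lemma sub_nf_mem (hα : 0 < α) (d : Fin 3 →₀ ℕ) (c : k) :
    monomial d c - monomial (nf α A β b' B γ c' C d) c ∈
      Ideal.span {(X 0 ^ (α + A) - X 1 ^ b' * X 2 ^ c' : MvPolynomial (Fin 3) k)} := by
  have ha : 0 < α + A := by omega
  obtain ⟨n, hn⟩ : ∃ n, d 0 = n := ⟨d 0, rfl⟩
  induction n using Nat.strong_induction_on generalizing d with
  | _ n ih =>
    by_cases hlt : d 0 < α + A
    · have : nf α A β b' B γ c' C d = d := by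
        unfold nf
        rw [Nat.mod_eq_of_lt hlt, Nat.div_eq_of_lt hlt]
        simp [← eq_e3]
      rw [this, sub_self]
      exact zero_mem _
    · push_neg at hlt
      set a := α + A with ha'
      set d' : Fin 3 →₀ ℕ := e3 (d 0 - a) (d 1 + b') (d 2 + c') with hd'
      have hstep : monomial d c - monomial d' c =
          monomial (e3 (d 0 - a) (d 1) (d 2)) c *
            (X 0 ^ a - X 1 ^ b' * X 2 ^ c') := by
        rw [mul_sub]
        congr 1
        · rw [X_pow_eq_monomial, monomial_mul, mul_one, e3_add_single0,
            Nat.sub_add_cancel hlt, ← eq_e3]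
        · have : (X 1 ^ b' * X 2 ^ c' : MvPolynomial (Fin 3) k) = X 0 ^ 0 * X 1 ^ b' * X 2 ^ c' := by
            rw [pow_zero, one_mul]
          rw [hd', this, X_pows_eq, monomial_mul, mul_one, e3_add, add_zero]
      have hnf' : nf α A β b' B γ c' C d' = nf α A β b' B γ c' C d := by
        unfold nf
        have h0' : d' 0 = d 0 - a := by rw [hd']; simp
        have h1' : d' 1 = d 1 + b' := by rw [hd']; simp
        have h2' : d' 2 = d 2 + c' := by rw [hd']; simp
        rw [h0', h1', h2']
        obtain ⟨m, hm⟩ : ∃ m, d 0 = m + a := ⟨d 0 - a, by omega⟩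
        rw [hm, Nat.add_sub_cancel, Nat.add_div_right _ ha, Nat.add_mod_right]
        congr 1 <;> ring
      have hmem1 : monomial d c - monomial d' c ∈
          Ideal.span {(X 0 ^ a - X 1 ^ b' * X 2 ^ c' : MvPolynomial (Fin 3) k)} := by
        rw [hstep]
        exact Ideal.mul_mem_left _ _ (Ideal.subset_span rfl)
      have hmem2 : monomial d' c - monomial (nf α A β b' B γ c' C d') c ∈
          Ideal.span {(X 0 ^ a - X 1 ^ b' * X 2 ^ c' : MvPolynomial (Fin 3) k)} := by
        refine ih (d' 0) ?_ d' rfl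
        have : d' 0 = d 0 - a := by rw [hd']; simp
        omega
      have := add_mem hmem1 hmem2
      rw [hnf'] at this
      convert this using 1
      ring
  done


noncomputable def Jset (α A β b' B γ c' C : ℕ) (k : Type*) [Field k] :
    Set (MvPolynomial (Fin 3) k) :=
  {X 1 ^ (b' + B), X 2 ^ (c' + C), X 0 ^ A * X 1 ^ B, X 0 ^ A * X 2 ^ C,
    X 0 ^ (α + A) - X 1 ^ b' * X 2 ^ c'}

lemma mem_Jset1 : (X 1 ^ (b' + B) : MvPolynomial (Fin 3) k) ∈ Jset α A β b' B γ c' C k :=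
  Set.mem_insert _ _
lemma mem_Jset2 : (X 2 ^ (c' + C) : MvPolynomial (Fin 3) k) ∈ Jset α A β b' B γ c' C k :=
  Set.mem_insert_of_mem _ (Set.mem_insert _ _)
lemma mem_Jset3 : (X 0 ^ A * X 1 ^ B : MvPolynomial (Fin 3) k) ∈ Jset α A β b' B γ c' C k :=
  Set.mem_insert_of_mem _ (Set.mem_insert_of_mem _ (Set.mem_insert _ _))
lemma mem_Jset4 : (X 0 ^ A * X 2 ^ C : MvPolynomial (Fin 3) k) ∈ Jset α A β b' B γ c' C k :=
  Set.mem_insert_of_mem _ (Set.mem_insert_of_mem _ (Set.mem_insert_of_mem _ (Set.mem_insert _ _)))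
lemma mem_Jset5 :
    (X 0 ^ (α + A) - X 1 ^ b' * X 2 ^ c' : MvPolynomial (Fin 3) k) ∈ Jset α A β b' B γ c' C k :=
  Set.mem_insert_of_mem _ (Set.mem_insert_of_mem _ (Set.mem_insert_of_mem _
    (Set.mem_insert_of_mem _ rfl)))

lemma not_ok2_mem_J {d : Fin 3 →₀ ℕ} (h2 : ¬ ok2 α A β b' B γ c' C d) (hd : d 0 < α + A) (c : k) :
    monomial d c ∈ Ideal.span (Jset α A β b' B γ c' C k) := by
  unfold ok2 at h2
  push_neg at h2
  by_cases hA : d 0 < A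
  · have hor : b' + B ≤ d 1 ∨ c' + C ≤ d 2 := by
      have := h2.1
      omega
    rcases hor with hy | hz
    · have heq : monomial d c = monomial (e3 (d 0) (d 1 - (b'+B)) (d 2)) c * X 1 ^ (b'+B) := by
        rw [← monomial_eq_mul1]
        have hj : d 1 - (b'+B) + (b'+B) = d 1 := by omega
        rw [hj, ← eq_e3]
      rw [heq]
      exact Ideal.mul_mem_left _ _ (Ideal.subset_span (mem_Jset1 α A β b' B γ c' C))
    · have heq : monomial d c = monomial (e3 (d 0) (d 1) (d 2 - (c'+C))) c * X 2 ^ (c'+C) := by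
        rw [← monomial_eq_mul2]
        have hl : d 2 - (c'+C) + (c'+C) = d 2 := by omega
        rw [hl, ← eq_e3]
      rw [heq]
      exact Ideal.mul_mem_left _ _ (Ideal.subset_span (mem_Jset2 α A β b' B γ c' C))
  · push_neg at hA
    have hor : B ≤ d 1 ∨ C ≤ d 2 := by
      have := h2.2
      omega
    rcases hor with hy | hz
    · have heq : monomial d c = monomial (e3 (d 0 - A) (d 1 - B) (d 2)) c * (X 0 ^ A * X 1 ^ B) := by
        rw [← monomial_eq_mul01]
        have hi : d 0 - A + A = d 0 := by omega
        have hj : d 1 - B + B = d 1 := by omega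
        rw [hi, hj, ← eq_e3]
      rw [heq]
      exact Ideal.mul_mem_left _ _ (Ideal.subset_span (mem_Jset3 α A β b' B γ c' C))
    · have heq : monomial d c = monomial (e3 (d 0 - A) (d 1) (d 2 - C)) c * (X 0 ^ A * X 2 ^ C) := by
        rw [← monomial_eq_mul02]
        have hi : d 0 - A + A = d 0 := by omega
        have hl : d 2 - C + C = d 2 := by omega
        rw [hi, hl, ← eq_e3]
      rw [heq]
      exact Ideal.mul_mem_left _ _ (Ideal.subset_span (mem_Jset4 α A β b' B γ c' C))

lemma sub_DF_mem (hα : 0 < α) (g : MvPolynomial (Fin 3) k) :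
    g - DF α A β b' B γ c' C g ∈ Ideal.span (Jset α A β b' B γ c' C k) := by
  have ha : 0 < α + A := by omega
  induction g using MvPolynomial.induction_on' with
  | monomial d c =>
    rw [DF_monomial]
    have key : monomial d c - monomial (nf α A β b' B γ c' C d) c ∈
        Ideal.span (Jset α A β b' B γ c' C k) := by
      refine Ideal.span_mono ?_ (sub_nf_mem α A β b' B γ c' C hα d c)
      intro x hx
      rw [Set.mem_singleton_iff] at hx
      rw [hx]
      exact mem_Jset5 _ _ _ _ _ _ _ _
    split_ifs with h
    · exact key
    · have hmod : (nf α A β b' B γ c' C d) 0 < α + A := by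
        unfold nf
        simp only [e3_apply0]
        exact Nat.mod_lt _ ha
      have := add_mem key (not_ok2_mem_J α A β b' B γ c' C h hmod c)
      convert this using 1
      ring
  | add p q hp hq =>
    rw [DF_add]
    have := add_mem hp hq
    convert this using 1
    ring


lemma NF_zero : NF α A β b' B γ c' C (0 : MvPolynomial (Fin 3) k) = 0 := by
  unfold NF
  exact Finsupp.sum_zero_index

lemma NF_sum {ι : Type*} (s : Finset ι) (f : ι → MvPolynomial (Fin 3) k) :
    NF α A β b' B γ c' C (∑ x ∈ s, f x) = ∑ x ∈ s, NF α A β b' B γ c' C (f x) := by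
  classical
  induction s using Finset.induction_on with
  | empty => simp [NF_zero]
  | insert _ _ hx ih =>
    rw [Finset.sum_insert hx, Finset.sum_insert hx, NF_add, ih]

lemma coeff_DF_zero (g : MvPolynomial (Fin 3) k) {e : Fin 3 →₀ ℕ}
    (he : ¬ ok2 α A β b' B γ c' C e) : coeff e (DF α A β b' B γ c' C g) = 0 := by
  induction g using MvPolynomial.induction_on' with
  | monomial d c =>
    rw [DF_monomial]
    split_ifs with h
    · rw [coeff_monomial]
      split_ifs with h'
      · exact absurd (h' ▸ h) he
      · rfl
    · simp
  | add p q hp hq =>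
    rw [DF_add, coeff_add, hp, hq, add_zero]

lemma add_mu_apply (d : Fin 3 →₀ ℕ) (t : Fin 3) :
    (e3 α β γ + d) t = e3 α β γ t + d t := Finsupp.add_apply _ _ _

lemma NF_mul_monomial_ok2 (hα : 0 < α) {d : Fin 3 →₀ ℕ} (hd : ok2 α A β b' B γ c' C d) (c : k) :
    NF α A β b' B γ c' C (monomial (e3 α β γ) 1 * monomial d c) =
      monomial (phi α A β b' B γ c' C d) c := by
  rw [monomial_mul, one_mul, NF_monomial]
  have h0 : (e3 α β γ + d) 0 = α + d 0 := by rw [add_mu_apply]; simp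
  have h1 : (e3 α β γ + d) 1 = β + d 1 := by rw [add_mu_apply]; simp
  have h2 : (e3 α β γ + d) 2 = γ + d 2 := by rw [add_mu_apply]; simp
  unfold ok2 at hd
  unfold phi
  by_cases hA : d 0 < A
  · obtain ⟨-, hy, hz⟩ : d 0 < A ∧ d 1 < b' + B ∧ d 2 < c' + C := by
      rcases hd with h | h
      · exact h
      · omega
    have hq : (α + d 0) / (α + A) = 0 := Nat.div_eq_of_lt (by omega)
    have hm : (α + d 0) % (α + A) = α + d 0 := Nat.mod_eq_of_lt (by omega)
    rw [if_pos (by unfold ok; rw [h0, h1, h2, hq]; omega)]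
    unfold nf
    rw [h0, h1, h2, hq, hm, if_pos hA]
    congr 1 <;> ring
  · obtain ⟨hA', hup, hy, hz⟩ : A ≤ d 0 ∧ d 0 < α + A ∧ d 1 < B ∧ d 2 < C := by
      rcases hd with h | h
      · omega
      · exact h
    have hq : (α + d 0) / (α + A) = 1 := by
      exact Nat.div_eq_of_lt_le (by omega) (by omega)
    have hm : (α + d 0) % (α + A) = d 0 - A := by
      rw [Nat.mod_eq_sub_mod (by omega), Nat.mod_eq_of_lt (by omega)]
      omega
    rw [if_pos (by unfold ok; rw [h0, h1, h2, hq]; omega)]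
    unfold nf
    rw [h0, h1, h2, hq, hm, if_neg hA]
    congr 1 <;> ring

lemma phi_inj (hα : 0 < α) {d d' : Fin 3 →₀ ℕ} (hd : ok2 α A β b' B γ c' C d)
    (hd' : ok2 α A β b' B γ c' C d') (heq : phi α A β b' B γ c' C d = phi α A β b' B γ c' C d') :
    d = d' := by
  unfold ok2 at hd hd'
  unfold phi at heq
  have key : d 0 = d' 0 ∧ d 1 = d' 1 ∧ d 2 = d' 2 := by
    split_ifs at heq with h1 h2 h2 <;> obtain ⟨u, v, w⟩ := e3_inj heq <;> omega
  rw [eq_e3 d, eq_e3 d', key.1, key.2.1, key.2.2]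

lemma DF_eq_zero (hα : 0 < α) (p : MvPolynomial (Fin 3) k)
    (hsupp : ∀ e, ¬ ok2 α A β b' B γ c' C e → coeff e p = 0)
    (hNF : NF α A β b' B γ c' C (monomial (e3 α β γ) 1 * p) = 0) : p = 0 := by
  have hok2 : ∀ e ∈ p.support, ok2 α A β b' B γ c' C e := by
    intro e he
    by_contra hcon
    exact (MvPolynomial.mem_support_iff.1 he) (hsupp e hcon)
  have hrep : monomial (e3 α β γ) 1 * p =
      ∑ d ∈ p.support, monomial (e3 α β γ) 1 * monomial d (coeff d p) := by
    rw [← Finset.mul_sum, ← MvPolynomial.as_sum]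
  have hNF2 : NF α A β b' B γ c' C (monomial (e3 α β γ) (1:k) * p) =
      ∑ d ∈ p.support, monomial (phi α A β b' B γ c' C d) (coeff d p) := by
    rw [hrep, NF_sum]
    apply Finset.sum_congr rfl
    intro d hdsup
    exact NF_mul_monomial_ok2 α A β b' B γ c' C hα (hok2 d hdsup) _
  ext e
  rw [coeff_zero]
  by_cases hes : e ∈ p.support
  · have : coeff (phi α A β b' B γ c' C e) (NF α A β b' B γ c' C
        (monomial (e3 α β γ) (1:k) * p)) = coeff e p := by
      rw [hNF2, MvPolynomial.coeff_sum]
      rw [Finset.sum_eq_single e]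
      · rw [coeff_monomial, if_pos rfl]
      · intro d hds hne
        rw [coeff_monomial, if_neg]
        intro hcon
        exact hne (phi_inj α A β b' B γ c' C hα (hok2 d hds) (hok2 e hes) hcon)
      · intro hcon
        exact absurd hes hcon
    rw [← this, hNF, coeff_zero]
  · exact MvPolynomial.notMem_support_iff.1 hes

end Defs
end Stmt12

open Stmt12 in
theorem stmt_12 (k : Type*) [Field k] (a b c b' c' α β γ : ℕ)
    (hb'0 : 0 < b') (hb'b : b' < b) (hc'0 : 0 < c') (hc'c : c' < c)
    (hα0 : 0 < α) (hαa : α < a) (hβ : β < b - b') (hγ : γ < c - c') :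
    (Ideal.span {X 0 ^ a - X 1 ^ b' * X 2 ^ c', X 1 ^ b, X 2 ^ c} :
        Ideal (MvPolynomial (Fin 3) k)) ⊓
      Ideal.span {X 0 ^ α * X 1 ^ β * X 2 ^ γ} =
    Ideal.span {X 0 ^ α * X 1 ^ β * X 2 ^ γ * X 1 ^ (b - β),
      X 0 ^ α * X 1 ^ β * X 2 ^ γ * X 2 ^ (c - γ),
      X 0 ^ α * X 1 ^ β * X 2 ^ γ * (X 0 ^ (a - α) * X 1 ^ (b - b' - β)),
      X 0 ^ α * X 1 ^ β * X 2 ^ γ * (X 0 ^ (a - α) * X 2 ^ (c - c' - γ)),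
      X 0 ^ α * X 1 ^ β * X 2 ^ γ * (X 0 ^ a - X 1 ^ b' * X 2 ^ c')} := by
  obtain ⟨A, rfl⟩ : ∃ A', a = α + A' := ⟨a - α, by omega⟩
  obtain ⟨B, rfl⟩ : ∃ B', b = β + b' + B' := ⟨b - β - b', by omega⟩
  obtain ⟨C, rfl⟩ : ∃ C', c = γ + c' + C' := ⟨c - γ - c', by omega⟩
  rw [show β + b' + B - β = b' + B from by omega,
      show β + b' + B - b' - β = B from by omega,
      show γ + c' + C - γ = c' + C from by omega,
      show γ + c' + C - c' - γ = C from by omega,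
      show α + A - α = A from by omega]
  set m : MvPolynomial (Fin 3) k := X 0 ^ α * X 1 ^ β * X 2 ^ γ with hm
  set f : MvPolynomial (Fin 3) k := X 0 ^ (α + A) - X 1 ^ b' * X 2 ^ c' with hf
  have hfI : f ∈ (Ideal.span {f, X 1 ^ (β + b' + B), X 2 ^ (γ + c' + C)} :
      Ideal (MvPolynomial (Fin 3) k)) := Ideal.subset_span (Set.mem_insert _ _)
  have hybI : (X 1 ^ (β + b' + B) : MvPolynomial (Fin 3) k) ∈
      Ideal.span {f, X 1 ^ (β + b' + B), X 2 ^ (γ + c' + C)} :=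
    Ideal.subset_span (Set.mem_insert_of_mem _ (Set.mem_insert _ _))
  have hzcI : (X 2 ^ (γ + c' + C) : MvPolynomial (Fin 3) k) ∈
      Ideal.span {f, X 1 ^ (β + b' + B), X 2 ^ (γ + c' + C)} :=
    Ideal.subset_span (Set.mem_insert_of_mem _ (Set.mem_insert_of_mem _ rfl))
  -- RHS ≤ LHS
  have hRL : Ideal.span {m * X 1 ^ (b' + B), m * X 2 ^ (c' + C), m * (X 0 ^ A * X 1 ^ B),
      m * (X 0 ^ A * X 2 ^ C), m * f} ≤
      (Ideal.span {f, X 1 ^ (β + b' + B), X 2 ^ (γ + c' + C)} :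
        Ideal (MvPolynomial (Fin 3) k)) ⊓ Ideal.span {m} := by
    rw [Ideal.span_le]
    rintro x hx
    simp only [Set.mem_insert_iff, Set.mem_singleton_iff] at hx
    simp only [SetLike.mem_coe, Submodule.mem_inf]
    rcases hx with rfl | rfl | rfl | rfl | rfl
    · constructor
      · have : m * X 1 ^ (b' + B) = (X 0 ^ α * X 2 ^ γ) * X 1 ^ (β + b' + B) := by
          simp only [hm, pow_add]; ring
        rw [this]
        exact Ideal.mul_mem_left _ _ hybI
      · exact Ideal.mem_span_singleton'.2 ⟨X 1 ^ (b' + B), by ring⟩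
    · constructor
      · have : m * X 2 ^ (c' + C) = (X 0 ^ α * X 1 ^ β) * X 2 ^ (γ + c' + C) := by
          simp only [hm, pow_add]; ring
        rw [this]
        exact Ideal.mul_mem_left _ _ hzcI
      · exact Ideal.mem_span_singleton'.2 ⟨X 2 ^ (c' + C), by ring⟩
    · constructor
      · have : m * (X 0 ^ A * X 1 ^ B) =
            (X 1 ^ (β + B) * X 2 ^ γ) * f + (X 2 ^ (γ + c')) * X 1 ^ (β + b' + B) := by
          simp only [hm, hf, pow_add]; ring
        rw [this]
        exact add_mem (Ideal.mul_mem_left _ _ hfI) (Ideal.mul_mem_left _ _ hybI)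
      · exact Ideal.mem_span_singleton'.2 ⟨X 0 ^ A * X 1 ^ B, by ring⟩
    · constructor
      · have : m * (X 0 ^ A * X 2 ^ C) =
            (X 1 ^ β * X 2 ^ (γ + C)) * f + (X 1 ^ (β + b')) * X 2 ^ (γ + c' + C) := by
          simp only [hm, hf, pow_add]; ring
        rw [this]
        exact add_mem (Ideal.mul_mem_left _ _ hfI) (Ideal.mul_mem_left _ _ hzcI)
      · exact Ideal.mem_span_singleton'.2 ⟨X 0 ^ A * X 2 ^ C, by ring⟩
    · constructor
      · exact Ideal.mul_mem_left _ _ hfI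
      · exact Ideal.mem_span_singleton'.2 ⟨f, by ring⟩
  refine le_antisymm ?_ hRL
  -- LHS ≤ RHS
  rintro p hp
  rw [Submodule.mem_inf] at hp
  obtain ⟨hpI, hpm⟩ := hp
  obtain ⟨g, rfl⟩ := Ideal.mem_span_singleton.1 hpm
  -- transfer: x ∈ span Jset → m * x ∈ RHS
  have htrans : ∀ x ∈ Ideal.span (Jset α A β b' B γ c' C k), m * x ∈
      Ideal.span {m * X 1 ^ (b' + B), m * X 2 ^ (c' + C), m * (X 0 ^ A * X 1 ^ B),
        m * (X 0 ^ A * X 2 ^ C), m * f} := by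
    intro x hx
    induction hx using Submodule.span_induction with
    | mem x hxx =>
      rcases hxx with rfl | rfl | rfl | rfl | rfl
      · exact Ideal.subset_span (Set.mem_insert _ _)
      · exact Ideal.subset_span (Set.mem_insert_of_mem _ (Set.mem_insert _ _))
      · exact Ideal.subset_span
          (Set.mem_insert_of_mem _ (Set.mem_insert_of_mem _ (Set.mem_insert _ _)))
      · exact Ideal.subset_span (Set.mem_insert_of_mem _ (Set.mem_insert_of_mem _
          (Set.mem_insert_of_mem _ (Set.mem_insert _ _))))
      · exact Ideal.subset_span (Set.mem_insert_of_mem _ (Set.mem_insert_of_mem _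
          (Set.mem_insert_of_mem _ (Set.mem_insert_of_mem _ rfl))))
    | zero => rw [mul_zero]; exact zero_mem _
    | add x y _ _ hx hy => rw [mul_add]; exact add_mem hx hy
    | smul r x _ hx =>
      have hrw : m * (r • x) = r * (m * x) := by rw [smul_eq_mul]; ring
      rw [hrw]
      exact Ideal.mul_mem_left _ _ hx
  have hmmono : m = monomial (e3 α β γ) (1 : k) := X_pows_eq α β γ
  have hNFg : NF α A β b' B γ c' C (m * g) = 0 := NF_zero_of_mem α A β b' B γ c' C hα0 hpI
  have hsub : g - DF α A β b' B γ c' C g ∈ Ideal.span (Jset α A β b' B γ c' C k) :=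
    sub_DF_mem α A β b' B γ c' C hα0 g
  have hsubRHS := htrans _ hsub
  have hsubI : m * (g - DF α A β b' B γ c' C g) ∈
      Ideal.span {f, X 1 ^ (β + b' + B), X 2 ^ (γ + c' + C)} :=
    (le_trans hRL inf_le_left) hsubRHS
  have hNFsub : NF α A β b' B γ c' C (m * (g - DF α A β b' B γ c' C g)) = 0 :=
    NF_zero_of_mem α A β b' B γ c' C hα0 hsubI
  have hNFDF : NF α A β b' B γ c' C (m * DF α A β b' B γ c' C g) = 0 := by
    have : m * DF α A β b' B γ c' C g = m * g - m * (g - DF α A β b' B γ c' C g) := by ring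
    rw [this, NF_sub, hNFg, hNFsub, sub_zero]
  have hDF0 : DF α A β b' B γ c' C g = 0 := by
    refine DF_eq_zero α A β b' B γ c' C hα0 _ (fun e he => coeff_DF_zero α A β b' B γ c' C g he) ?_
    rw [← hmmono]
    exact hNFDF
  have hgJ : g ∈ Ideal.span (Jset α A β b' B γ c' C k) := by
    have := hsub
    rw [hDF0, sub_zero] at this
    exact this
  exact htrans g hgJ
end

section
/- Let k be a field and φ : k[x₁, x₂, x₃, x₄] → k[t] the map with x₁ ↦ t^8, x₂ ↦ t^{12}, x₃ ↦ t^{14}, x₄ ↦ t^{21}. Then ker φ = (x₄² − x₃³, x₃² − x₁²x₂, x₂² − x₁³). -/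
open MvPolynomial

noncomputable section Aux16

private def wt16 (v : Fin 4 →₀ ℕ) : ℕ := 8 * v 0 + 12 * v 1 + 14 * v 2 + 21 * v 3

private def Red16 (v : Fin 4 →₀ ℕ) : Prop := v 1 ≤ 1 ∧ v 2 ≤ 1 ∧ v 3 ≤ 1

section
variable {k : Type*} [Field k]

private def I16 (k : Type*) [Field k] : Ideal (MvPolynomial (Fin 4) k) :=
  Ideal.span {X 3 ^ 2 - X 2 ^ 3, X 2 ^ 2 - X 0 ^ 2 * X 1, X 1 ^ 2 - X 0 ^ 3}

private lemma step16 (w s t : Fin 4 →₀ ℕ)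
    (h : monomial s (1:k) - monomial t 1 ∈ I16 k) :
    monomial (w + s) (1:k) - monomial (w + t) 1 ∈ I16 k := by
  have : monomial (w + s) (1:k) - monomial (w + t) 1
      = monomial w 1 * (monomial s 1 - monomial t 1) := by
    rw [mul_sub, monomial_mul, monomial_mul, one_mul]
  rw [this]
  exact Ideal.mul_mem_left _ _ h

private lemma gen1 : (monomial (Finsupp.single 3 2) (1:k) - monomial (Finsupp.single 2 3) 1) ∈ I16 k := by
  rw [← X_pow_eq_monomial, ← X_pow_eq_monomial]
  exact Ideal.subset_span (by simp)

private lemma gen2 : (monomial (Finsupp.single 2 2) (1:k) - monomial (Finsupp.single 0 2 + Finsupp.single 1 1) 1) ∈ I16 k := by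
  have e : (monomial (Finsupp.single 0 2 + Finsupp.single 1 1) (1:k) : MvPolynomial (Fin 4) k) = X 0 ^ 2 * X 1 := by
    rw [X_pow_eq_monomial, X, monomial_mul, one_mul]
  rw [← X_pow_eq_monomial, e]
  exact Ideal.subset_span (by simp)

private lemma gen3_s16 : (monomial (Finsupp.single 1 2) (1:k) - monomial (Finsupp.single 0 3) 1) ∈ I16 k := by
  rw [← X_pow_eq_monomial, ← X_pow_eq_monomial]
  exact Ideal.subset_span (by simp)

private lemma reduce16 (v : Fin 4 →₀ ℕ) :
    ∃ u, Red16 u ∧ wt16 u = wt16 v ∧ monomial v (1:k) - monomial u 1 ∈ I16 k := by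
  suffices H : ∀ N v, v 1 + v 2 + 2 * v 3 ≤ N →
      ∃ u, Red16 u ∧ wt16 u = wt16 v ∧ monomial v (1:k) - monomial u 1 ∈ I16 k from
    H _ v le_rfl
  intro N
  induction N with
  | zero =>
    intro v hv
    exact ⟨v, ⟨by omega, by omega, by omega⟩, rfl, by simp [I16]⟩
  | succ N ih =>
    intro v hv
    by_cases h3 : 2 ≤ v 3
    · set w := v - Finsupp.single 3 2 with hw
      have hle : Finsupp.single 3 2 ≤ v := Finsupp.single_le_iff.mpr h3
      have hv' : v = w + Finsupp.single 3 2 := by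
        rw [hw, tsub_add_cancel_of_le hle]
      set u' := w + Finsupp.single 2 3 with hu'
      have hwc : ∀ i, w i = v i - (Finsupp.single 3 2 : Fin 4 →₀ ℕ) i := fun i => by
        rw [hw]; rfl
      have hc0 : u' 0 = v 0 ∧ u' 1 = v 1 ∧ u' 2 = v 2 + 3 ∧ u' 3 = v 3 - 2 := by
        refine ⟨?_, ?_, ?_, ?_⟩ <;>
          simp [hu', Finsupp.add_apply, hwc, Finsupp.single_apply]
      obtain ⟨c0, c1, c2, c3⟩ := hc0
      have hmem : monomial v (1:k) - monomial u' 1 ∈ I16 k := by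
        rw [hv', hu']
        exact step16 w _ _ gen1
      obtain ⟨u, hred, hwt, hm⟩ := ih u' (by omega)
      refine ⟨u, hred, ?_, ?_⟩
      · rw [hwt]; unfold wt16; omega
      · have := (I16 k).add_mem hmem hm
        simpa using this
    · by_cases h2 : 2 ≤ v 2
      · set w := v - Finsupp.single 2 2 with hw
        have hle : Finsupp.single 2 2 ≤ v := Finsupp.single_le_iff.mpr h2
        have hv' : v = w + Finsupp.single 2 2 := by
          rw [hw, tsub_add_cancel_of_le hle]
        set u' := w + (Finsupp.single 0 2 + Finsupp.single 1 1) with hu'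
        have hwc : ∀ i, w i = v i - (Finsupp.single 2 2 : Fin 4 →₀ ℕ) i := fun i => by
          rw [hw]; rfl
        have hc0 : u' 0 = v 0 + 2 ∧ u' 1 = v 1 + 1 ∧ u' 2 = v 2 - 2 ∧ u' 3 = v 3 := by
          refine ⟨?_, ?_, ?_, ?_⟩ <;>
            simp [hu', Finsupp.add_apply, hwc, Finsupp.single_apply]
        obtain ⟨c0, c1, c2, c3⟩ := hc0
        have hmem : monomial v (1:k) - monomial u' 1 ∈ I16 k := by
          rw [hv', hu']
          exact step16 w _ _ gen2
        obtain ⟨u, hred, hwt, hm⟩ := ih u' (by omega)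
        refine ⟨u, hred, ?_, ?_⟩
        · rw [hwt]; unfold wt16; omega
        · have := (I16 k).add_mem hmem hm
          simpa using this
      · by_cases h1 : 2 ≤ v 1
        · set w := v - Finsupp.single 1 2 with hw
          have hle : Finsupp.single 1 2 ≤ v := Finsupp.single_le_iff.mpr h1
          have hv' : v = w + Finsupp.single 1 2 := by
            rw [hw, tsub_add_cancel_of_le hle]
          set u' := w + Finsupp.single 0 3 with hu'
          have hwc : ∀ i, w i = v i - (Finsupp.single 1 2 : Fin 4 →₀ ℕ) i := fun i => by
            rw [hw]; rfl
          have hc0 : u' 0 = v 0 + 3 ∧ u' 1 = v 1 - 2 ∧ u' 2 = v 2 ∧ u' 3 = v 3 := by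
            refine ⟨?_, ?_, ?_, ?_⟩ <;>
              simp [hu', Finsupp.add_apply, hwc, Finsupp.single_apply]
          obtain ⟨c0, c1, c2, c3⟩ := hc0
          have hmem : monomial v (1:k) - monomial u' 1 ∈ I16 k := by
            rw [hv', hu']
            exact step16 w _ _ gen3_s16
          obtain ⟨u, hred, hwt, hm⟩ := ih u' (by omega)
          refine ⟨u, hred, ?_, ?_⟩
          · rw [hwt]; unfold wt16; omega
          · have := (I16 k).add_mem hmem hm
            simpa using this
        · exact ⟨v, ⟨by omega, by omega, by omega⟩, rfl, by simp [I16]⟩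

private lemma wt16_inj {v u : Fin 4 →₀ ℕ} (hv : Red16 v) (hu : Red16 u)
    (h : wt16 v = wt16 u) : v = u := by
  obtain ⟨h1, h2, h3⟩ := hv
  obtain ⟨g1, g2, g3⟩ := hu
  unfold wt16 at h
  ext i
  fin_cases i <;> simp <;> omega

private def phi16 (k : Type*) [Field k] : MvPolynomial (Fin 4) k →ₐ[k] Polynomial k :=
  MvPolynomial.aeval (fun i : Fin 4 => (Polynomial.X : Polynomial k) ^ (![8, 12, 14, 21] i))

private lemma phi16_monomial (v : Fin 4 →₀ ℕ) (c : k) :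
    phi16 k (monomial v c) = Polynomial.C c * Polynomial.X ^ wt16 v := by
  rw [phi16, aeval_monomial]
  congr 1
  have : (v.prod fun i e => ((Polynomial.X : Polynomial k) ^ (![8, 12, 14, 21] i)) ^ e)
      = Polynomial.X ^ (∑ i ∈ v.support, (![8, 12, 14, 21] i) * v i) := by
    rw [Finsupp.prod]
    rw [← Finset.prod_pow_eq_pow_sum]
    exact Finset.prod_congr rfl fun i _ => by rw [← pow_mul]
  rw [this]
  congr 1
  rw [show wt16 v = ∑ i : Fin 4, (![8, 12, 14, 21] i) * v i by
    simp [wt16, Fin.sum_univ_four]]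
  exact Finset.sum_subset (Finset.subset_univ _) (fun i _ hi => by
    simp [Finsupp.notMem_support_iff.mp hi])

private lemma red_inj16 (r : MvPolynomial (Fin 4) k) (hred : ∀ v ∈ r.support, Red16 v)
    (h0 : phi16 k r = 0) : r = 0 := by
  ext v0
  simp only [coeff_zero]
  by_cases hv0 : v0 ∈ r.support
  · have key : Polynomial.coeff (phi16 k r) (wt16 v0) = coeff v0 r := by
      conv_lhs => rw [r.as_sum, map_sum]
      simp_rw [phi16_monomial]
      rw [Polynomial.finset_sum_coeff]
      rw [Finset.sum_eq_single v0]
      · simp [Polynomial.coeff_C_mul, Polynomial.coeff_X_pow]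
      · intro v hv hne
        have : wt16 v ≠ wt16 v0 := fun h =>
          hne (wt16_inj (hred v hv) (hred v0 hv0) h)
        simp [Polynomial.coeff_C_mul, Polynomial.coeff_X_pow, Ne.symm this]
      · intro h; exact absurd hv0 h
    rw [← key, h0, Polynomial.coeff_zero]
  · exact notMem_support_iff.mp hv0

private lemma ker_le16 : I16 k ≤ RingHom.ker (phi16 k) := by
  rw [I16, Ideal.span_le]
  rintro g hg
  simp only [Set.mem_insert_iff, Set.mem_singleton_iff] at hg
  rcases hg with rfl | rfl | rfl <;>
    · simp only [SetLike.mem_coe, RingHom.mem_ker, phi16, map_sub, map_pow, map_mul, aeval_X]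
      norm_num [← pow_mul, ← pow_add, show (![8, 12, 14, 21] : Fin 4 → ℕ) 3 = 21 from rfl,
        show (![8, 12, 14, 21] : Fin 4 → ℕ) 2 = 14 from rfl]

end
end Aux16

theorem stmt_16 (k : Type*) [Field k] :
    RingHom.ker (MvPolynomial.aeval
        (fun i : Fin 4 => (Polynomial.X : Polynomial k) ^ (![8, 12, 14, 21] i)) :
      MvPolynomial (Fin 4) k →ₐ[k] Polynomial k) =
    Ideal.span {X 3 ^ 2 - X 2 ^ 3, X 2 ^ 2 - X 0 ^ 2 * X 1, X 1 ^ 2 - X 0 ^ 3} := by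
  show RingHom.ker (phi16 k).toRingHom = I16 k
  refine le_antisymm ?_ ker_le16
  intro p hp
  have hp' : phi16 k p = 0 := hp
  choose u hredu hwtu hmemu using fun v : Fin 4 →₀ ℕ => reduce16 (k := k) v
  set r : MvPolynomial (Fin 4) k :=
    ∑ v ∈ p.support, C (coeff v p) * monomial (u v) 1 with hr
  have heq : ∑ v ∈ p.support, C (coeff v p) * (monomial v 1 - monomial (u v) 1)
      = p - r := by
    rw [hr]
    simp_rw [mul_sub, C_mul_monomial, mul_one]
    rw [Finset.sum_sub_distrib, ← p.as_sum]
  have hpr : p - r ∈ I16 k :=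
    heq ▸ Ideal.sum_mem _ fun v _ => Ideal.mul_mem_left _ _ (hmemu v)
  have hrk : phi16 k r = 0 := by
    have h1 : phi16 k (p - r) = 0 := ker_le16 hpr
    rw [map_sub, hp', zero_sub, neg_eq_zero] at h1
    exact h1
  have hrsupp : ∀ v ∈ r.support, Red16 v := by
    intro v hv
    rw [hr] at hv
    obtain ⟨v', _, hv'⟩ := Finset.mem_biUnion.mp (MvPolynomial.support_sum hv)
    rw [C_mul_monomial, mul_one] at hv'
    have : v ∈ ({u v'} : Finset (Fin 4 →₀ ℕ)) := support_monomial_subset hv'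
    rw [Finset.mem_singleton] at this
    rw [this]
    exact hredu v'
  have hr0 : r = 0 := red_inj16 r hrsupp hrk
  have hpe : p = p - r := by rw [hr0, sub_zero]
  rw [hpe]
  exact hpr
end

section
/- Let G be a numerical semigroup minimally generated by n₁ < n₂ < n₃ that is not symmetric, so that (by Herzog's theorem) there are positive integers with α₁n₁ = α₁₂n₂ + α₁₃n₃, α₂n₂ = α₂₁n₁ + α₂₃n₃, α₃n₃ = α₃₁n₁ + α₃₂n₂, and αᵢ = αⱼᵢ + α_kᵢ for each permutation (i,j,k) of (1,2,3). Then max{ord_G(w) : w ∈ Ap(G, n₁)} = max{α₂ + α₁₃ − 2, α₃ + α₁₂ − 2}, and moreover both (α₂ − 1)n₂ + (α₁₃ − 1)n₃ and (α₁₂ − 1)n₂ + (α₃ − 1)n₃ lie in Ap(G, n₁). -/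
/-- The set of lengths `a + b + c` of representations of `z`. -/
def len3 (n1 n2 n3 z : ℕ) : Set ℕ :=
  {s | ∃ a b c : ℕ, a * n1 + b * n2 + c * n3 = z ∧ a + b + c = s}

/-- The Apéry set of `⟨n1, n2, n3⟩` with respect to `n1`. -/
def ap3 (n1 n2 n3 : ℕ) : Set ℕ :=
  {x | x ∈ gen3 n1 n2 n3 ∧ ¬ ∃ y ∈ gen3 n1 n2 n3, y + n1 = x}

lemma key3 (n1 n2 n3 α1 α2 α3 α12 α13 : ℕ)
    (h1 : 0 < n1) (h2 : 0 < n2) (h3 : 0 < n3) (hα1p : 0 < α1)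
    (hm1 : ∀ m x y : ℕ, 0 < m → m * n1 = x * n2 + y * n3 → α1 ≤ m)
    (hm2 : ∀ m x y : ℕ, 0 < m → m * n2 = x * n1 + y * n3 → α2 ≤ m)
    (hm3 : ∀ m x y : ℕ, 0 < m → m * n3 = x * n1 + y * n2 → α3 ≤ m)
    (hr1 : α1 * n1 = α12 * n2 + α13 * n3) :
    ∀ a : ℕ, 0 < a → ∀ B C b c : ℕ, b < α2 → c < α3 → ¬(α12 ≤ b ∧ α13 ≤ c) →
      a * n1 + B * n2 + C * n3 = b * n2 + c * n3 → False := by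
  intro a
  induction a using Nat.strong_induction_on with
  | _ a IH =>
  intro ha B C b c hb hc hbc heq
  rcases le_or_gt b B with hB | hB
  · rcases le_or_gt c C with hC | hC
    · have e2 : b * n2 ≤ B * n2 := Nat.mul_le_mul_right _ hB
      have e3 : c * n3 ≤ C * n3 := Nat.mul_le_mul_right _ hC
      have e1 : 0 < a * n1 := Nat.mul_pos ha h1
      linarith
    · obtain ⟨γ, rfl⟩ := Nat.exists_eq_add_of_lt hC
      obtain ⟨β, rfl⟩ := Nat.exists_eq_add_of_le hB
      have key : (γ + 1) * n3 = a * n1 + β * n2 := by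
        zify at heq ⊢; linear_combination -heq
      have := hm3 (γ + 1) a β (Nat.succ_pos γ) key
      omega
  · rcases le_or_gt c C with hC | hC
    · obtain ⟨β, rfl⟩ := Nat.exists_eq_add_of_lt hB
      obtain ⟨γ, rfl⟩ := Nat.exists_eq_add_of_le hC
      have key : (β + 1) * n2 = a * n1 + γ * n3 := by
        zify at heq ⊢; linear_combination -heq
      have := hm2 (β + 1) a γ (Nat.succ_pos β) key
      omega
    · obtain ⟨β, rfl⟩ := Nat.exists_eq_add_of_lt hB
      obtain ⟨γ, rfl⟩ := Nat.exists_eq_add_of_lt hC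
      have h4 : a * n1 = (β + 1) * n2 + (γ + 1) * n3 := by
        zify at heq ⊢; linear_combination heq
      have ha1 : α1 ≤ a := hm1 a (β + 1) (γ + 1) ha h4
      by_cases hsub : α12 ≤ β + 1 ∧ α13 ≤ γ + 1
      · exact hbc ⟨by omega, by omega⟩
      · obtain ⟨δ, rfl⟩ := Nat.exists_eq_add_of_le ha1
        have h5 : δ * n1 + α12 * n2 + α13 * n3 = (β + 1) * n2 + (γ + 1) * n3 := by
          zify at h4 hr1 ⊢; linear_combination h4 - hr1
        rcases Nat.eq_zero_or_pos δ with rfl | hδ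
        · rcases lt_trichotomy (β + 1) α12 with hlt | hE | hgt
          · have hγ : α13 < γ + 1 := by
              by_contra hle
              push_neg at hle
              have e2 : (β + 1) * n2 < α12 * n2 := (Nat.mul_lt_mul_right h2).mpr hlt
              have e3 : (γ + 1) * n3 ≤ α13 * n3 := Nat.mul_le_mul_right _ hle
              linarith
            obtain ⟨e, he⟩ := Nat.exists_eq_add_of_lt hγ
            obtain ⟨d, hd⟩ := Nat.exists_eq_add_of_lt hlt
            have key : (e + 1) * n3 = 0 * n1 + (d + 1) * n2 := by
              have he' : (γ : ℤ) + 1 = α13 + e + 1 := by exact_mod_cast he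
              have hd' : (α12 : ℤ) = β + 1 + d + 1 := by exact_mod_cast hd
              zify at h5 ⊢
              linear_combination -h5 + (n2 : ℤ) * hd' - (n3 : ℤ) * he'
            have := hm3 (e + 1) 0 (d + 1) (Nat.succ_pos e) key
            omega
          · have h5' : (β + 1) * n2 + α13 * n3 = (β + 1) * n2 + (γ + 1) * n3 := by
              rw [← hE] at h5; simpa using h5
            have : α13 = γ + 1 :=
              Nat.eq_of_mul_eq_mul_right h3 (Nat.add_left_cancel h5')
            exact hsub ⟨le_of_eq hE.symm, le_of_eq this⟩
          · have hγ : γ + 1 ≤ α13 := by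
              by_contra hle
              push_neg at hle
              have e2 : α12 * n2 < (β + 1) * n2 := (Nat.mul_lt_mul_right h2).mpr hgt
              have e3 : α13 * n3 < (γ + 1) * n3 := (Nat.mul_lt_mul_right h3).mpr hle
              linarith
            obtain ⟨d, hd⟩ := Nat.exists_eq_add_of_lt hgt
            obtain ⟨e, he⟩ := Nat.exists_eq_add_of_le hγ
            have key : (d + 1) * n2 = 0 * n1 + e * n3 := by
              have he' : (α13 : ℤ) = γ + 1 + e := by exact_mod_cast he
              have hd' : (β : ℤ) + 1 = α12 + d + 1 := by exact_mod_cast hd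
              zify at h5 ⊢
              linear_combination -h5 - (n2 : ℤ) * hd' + (n3 : ℤ) * he'
            have := hm2 (d + 1) 0 e (Nat.succ_pos d) key
            omega
        · exact IH δ (by omega) hδ α12 α13 (β + 1) (γ + 1) (by omega) (by omega) hsub h5

theorem stmt_17 (n1 n2 n3 : ℕ) (h1 : 0 < n1) (h12 : n1 < n2) (h23 : n2 < n3)
    (hgcd : Nat.gcd (Nat.gcd n1 n2) n3 = 1)
    (hmin1 : ¬ ∃ b c : ℕ, b * n2 + c * n3 = n1)
    (hmin2 : ¬ ∃ a c : ℕ, a * n1 + c * n3 = n2)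
    (hmin3 : ¬ ∃ a b : ℕ, a * n1 + b * n2 = n3)
    (f : ℕ) (hf : f ∉ gen3 n1 n2 n3) (hfro : ∀ m : ℕ, f < m → m ∈ gen3 n1 n2 n3)
    (hnotsym : ¬ ∀ z : ℤ, (∃ x ∈ gen3 n1 n2 n3, (x : ℤ) = z) ↔
        ¬ ∃ x ∈ gen3 n1 n2 n3, (x : ℤ) = (f : ℤ) - z)
    (α1 α2 α3 α12 α13 α21 α23 α31 α32 : ℕ)
    (hα1 : IsLeast {α : ℕ | 0 < α ∧ ∃ b c : ℕ, α * n1 = b * n2 + c * n3} α1)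
    (hα2 : IsLeast {α : ℕ | 0 < α ∧ ∃ a c : ℕ, α * n2 = a * n1 + c * n3} α2)
    (hα3 : IsLeast {α : ℕ | 0 < α ∧ ∃ a b : ℕ, α * n3 = a * n1 + b * n2} α3)
    (hp12 : 0 < α12) (hp13 : 0 < α13) (hp21 : 0 < α21) (hp23 : 0 < α23)
    (hp31 : 0 < α31) (hp32 : 0 < α32)
    (hr1 : α1 * n1 = α12 * n2 + α13 * n3)
    (hr2 : α2 * n2 = α21 * n1 + α23 * n3)
    (hr3 : α3 * n3 = α31 * n1 + α32 * n2)
    (hsum1 : α1 = α21 + α31) (hsum2 : α2 = α12 + α32) (hsum3 : α3 = α13 + α23) :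
    IsGreatest {s | ∃ w ∈ ap3 n1 n2 n3, IsGreatest (len3 n1 n2 n3 w) s}
      (max (α2 + α13 - 2) (α3 + α12 - 2)) ∧
    (α2 - 1) * n2 + (α13 - 1) * n3 ∈ ap3 n1 n2 n3 ∧
    (α12 - 1) * n2 + (α3 - 1) * n3 ∈ ap3 n1 n2 n3 := by
  have h2 : 0 < n2 := by omega
  have h3 : 0 < n3 := by omega
  have hα1p : 0 < α1 := hα1.1.1
  have hm1 : ∀ m x y : ℕ, 0 < m → m * n1 = x * n2 + y * n3 → α1 ≤ m :=
    fun m x y hm he => hα1.2 ⟨hm, x, y, he⟩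
  have hm2 : ∀ m x y : ℕ, 0 < m → m * n2 = x * n1 + y * n3 → α2 ≤ m :=
    fun m x y hm he => hα2.2 ⟨hm, x, y, he⟩
  have hm3 : ∀ m x y : ℕ, 0 < m → m * n3 = x * n1 + y * n2 → α3 ≤ m :=
    fun m x y hm he => hα3.2 ⟨hm, x, y, he⟩
  have K := key3 n1 n2 n3 α1 α2 α3 α12 α13 h1 h2 h3 hα1p hm1 hm2 hm3 hr1
  have hA2 : 2 ≤ α2 := by omega
  have hA3 : 2 ≤ α3 := by omega
  have h13le : α13 ≤ α3 := by omega
  have h12lt : α12 < α2 := by omega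
  have hα1p2 : 1 ≤ α1 := hα1p
  -- general Apéry membership
  have apmem : ∀ b c : ℕ, b < α2 → c < α3 → ¬(α12 ≤ b ∧ α13 ≤ c) →
      b * n2 + c * n3 ∈ ap3 n1 n2 n3 := by
    intro b c hb hc hbc
    refine ⟨⟨0, b, c, by ring⟩, ?_⟩
    rintro ⟨y, ⟨A, B, C, hy⟩, hy1⟩
    refine K (A + 1) (Nat.succ_pos A) B C b c hb hc hbc ?_
    subst hy
    zify at hy1 ⊢
    linear_combination hy1
  have mem1 : (α2 - 1) * n2 + (α13 - 1) * n3 ∈ ap3 n1 n2 n3 :=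
    apmem (α2 - 1) (α13 - 1) (by omega) (by omega) (by omega)
  have mem2 : (α12 - 1) * n2 + (α3 - 1) * n3 ∈ ap3 n1 n2 n3 :=
    apmem (α12 - 1) (α3 - 1) (by omega) (by omega) (by omega)
  have c2 : (1 : ℕ) ≤ α2 := by omega
  have c3 : (1 : ℕ) ≤ α3 := by omega
  have c13 : (1 : ℕ) ≤ α13 := hp13
  have c12 : (1 : ℕ) ≤ α12 := hp12
  -- greatest length of w1
  have g1 : IsGreatest (len3 n1 n2 n3 ((α2 - 1) * n2 + (α13 - 1) * n3)) (α2 + α13 - 2) := by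
    constructor
    · exact ⟨0, α2 - 1, α13 - 1, by ring, by omega⟩
    · rintro s ⟨a, b, c, hEq, hs⟩
      rcases Nat.eq_zero_or_pos a with rfl | hap
      · have hEq' : b * n2 + c * n3 = (α2 - 1) * n2 + (α13 - 1) * n3 := by simpa using hEq
        have hble : b ≤ α2 - 1 := by
          by_contra hgt
          push_neg at hgt
          have hb2 : α2 ≤ b := by omega
          obtain ⟨d, rfl⟩ := Nat.exists_eq_add_of_le hb2
          have heq2 : α21 * n1 + d * n2 + (c + α23) * n3 =
              (α2 - 1) * n2 + (α13 - 1) * n3 := by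
            zify [c2, c13] at hEq' ⊢
            zify at hr2
            linear_combination hEq' - hr2
          exact K α21 hp21 d (c + α23) (α2 - 1) (α13 - 1) (by omega) (by omega)
            (by omega) heq2
        rcases Nat.lt_or_ge b (α2 - 1) with hblt | hbeq
        · exfalso
          have hcge : α13 ≤ c := by
            by_contra hle
            push_neg at hle
            have e2 : b * n2 < (α2 - 1) * n2 := (Nat.mul_lt_mul_right h2).mpr hblt
            have e3 : c * n3 ≤ (α13 - 1) * n3 := Nat.mul_le_mul_right _ (by omega)
            linarith
          obtain ⟨e, rfl⟩ := Nat.exists_eq_add_of_le hcge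
          have keyq : (α2 - 1 - b) * n2 = 0 * n1 + (e + 1) * n3 := by
            zify [c2, c13, hble, show b ≤ α2 - 1 from hble] at hEq' ⊢
            linear_combination -hEq'
          have := hm2 (α2 - 1 - b) 0 (e + 1) (by omega) keyq
          omega
        · have hb' : b = α2 - 1 := by omega
          subst hb'
          have hc' : c * n3 = (α13 - 1) * n3 := by omega
          have : c = α13 - 1 := Nat.eq_of_mul_eq_mul_right h3 hc'
          omega
      · exfalso
        obtain ⟨A, rfl⟩ : ∃ A, a = A + 1 := ⟨a - 1, by omega⟩
        exact K (A + 1) (Nat.succ_pos A) b c (α2 - 1) (α13 - 1) (by omega) (by omega)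
          (by omega) hEq
  -- greatest length of w2
  have g2 : IsGreatest (len3 n1 n2 n3 ((α12 - 1) * n2 + (α3 - 1) * n3)) (α3 + α12 - 2) := by
    constructor
    · exact ⟨0, α12 - 1, α3 - 1, by ring, by omega⟩
    · rintro s ⟨a, b, c, hEq, hs⟩
      rcases Nat.eq_zero_or_pos a with rfl | hap
      · have hEq' : b * n2 + c * n3 = (α12 - 1) * n2 + (α3 - 1) * n3 := by simpa using hEq
        have hcle : c ≤ α3 - 1 := by
          by_contra hgt
          push_neg at hgt
          have hc2 : α3 ≤ c := by omega
          obtain ⟨d, rfl⟩ := Nat.exists_eq_add_of_le hc2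
          have heq2 : α31 * n1 + (b + α32) * n2 + d * n3 =
              (α12 - 1) * n2 + (α3 - 1) * n3 := by
            zify [c12, c3] at hEq' ⊢
            zify at hr3
            linear_combination hEq' - hr3
          exact K α31 hp31 (b + α32) d (α12 - 1) (α3 - 1) (by omega) (by omega)
            (by omega) heq2
        rcases Nat.lt_or_ge c (α3 - 1) with hclt | hceq
        · exfalso
          have hbge : α12 ≤ b := by
            by_contra hle
            push_neg at hle
            have e2 : c * n3 < (α3 - 1) * n3 := (Nat.mul_lt_mul_right h3).mpr hclt
            have e3 : b * n2 ≤ (α12 - 1) * n2 := Nat.mul_le_mul_right _ (by omega)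
            linarith
          obtain ⟨e, rfl⟩ := Nat.exists_eq_add_of_le hbge
          have keyq : (α3 - 1 - c) * n3 = 0 * n1 + (e + 1) * n2 := by
            zify [c12, c3, hcle] at hEq' ⊢
            linear_combination -hEq'
          have := hm3 (α3 - 1 - c) 0 (e + 1) (by omega) keyq
          omega
        · have hc' : c = α3 - 1 := by omega
          subst hc'
          have hb' : b * n2 = (α12 - 1) * n2 := by omega
          have : b = α12 - 1 := Nat.eq_of_mul_eq_mul_right h2 hb'
          omega
      · exfalso
        obtain ⟨A, rfl⟩ : ∃ A, a = A + 1 := ⟨a - 1, by omega⟩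
        exact K (A + 1) (Nat.succ_pos A) b c (α12 - 1) (α3 - 1) (by omega) (by omega)
          (by omega) hEq
  refine ⟨⟨?_, ?_⟩, mem1, mem2⟩
  · -- the maximum is attained
    rcases le_total (α3 + α12 - 2) (α2 + α13 - 2) with hmx | hmx
    · rw [max_eq_left hmx]
      exact ⟨_, mem1, g1⟩
    · rw [max_eq_right hmx]
      exact ⟨_, mem2, g2⟩
  · -- upper bound
    rintro s ⟨w, ⟨hwgen, hwnap⟩, hgr⟩
    obtain ⟨a, b, c, hEq, hs⟩ := hgr.1
    have ha0 : a = 0 := by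
      by_contra hane
      obtain ⟨A, rfl⟩ : ∃ A, a = A + 1 := ⟨a - 1, by omega⟩
      exact hwnap ⟨A * n1 + b * n2 + c * n3, ⟨A, b, c, rfl⟩, by
        zify at hEq ⊢; linear_combination hEq⟩
    subst ha0
    have hb : b < α2 := by
      by_contra hge
      push_neg at hge
      obtain ⟨d, rfl⟩ := Nat.exists_eq_add_of_le hge
      refine hwnap ⟨(α21 - 1) * n1 + d * n2 + (c + α23) * n3,
        ⟨α21 - 1, d, c + α23, rfl⟩, ?_⟩
      zify [show (1:ℕ) ≤ α21 from hp21] at hEq ⊢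
      zify at hr2
      linear_combination hEq - hr2
    have hc : c < α3 := by
      by_contra hge
      push_neg at hge
      obtain ⟨d, rfl⟩ := Nat.exists_eq_add_of_le hge
      refine hwnap ⟨(α31 - 1) * n1 + (b + α32) * n2 + d * n3,
        ⟨α31 - 1, b + α32, d, rfl⟩, ?_⟩
      zify [show (1:ℕ) ≤ α31 from hp31] at hEq ⊢
      zify at hr3
      linear_combination hEq - hr3
    have hbc : ¬(α12 ≤ b ∧ α13 ≤ c) := by
      rintro ⟨hb12, hc13⟩
      obtain ⟨d, rfl⟩ := Nat.exists_eq_add_of_le hb12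
      obtain ⟨e, rfl⟩ := Nat.exists_eq_add_of_le hc13
      refine hwnap ⟨(α1 - 1) * n1 + d * n2 + e * n3, ⟨α1 - 1, d, e, rfl⟩, ?_⟩
      zify [hα1p2] at hEq ⊢
      zify at hr1
      linear_combination hEq + hr1
    rcases not_and_or.mp hbc with h | h
    · push_neg at h
      calc s ≤ α3 + α12 - 2 := by omega
        _ ≤ _ := le_max_right _ _
    · push_neg at h
      calc s ≤ α2 + α13 - 2 := by omega
        _ ≤ _ := le_max_left _ _
end

section
/- Let G be a symmetric numerical semigroup with multiplicity e = n₁ and Frobenius number f, and suppose the elasticity of f + n₁ is 1, i.e. ord_G(f + n₁) = min-ord_G(f + n₁). Then for every z ∈ G with z > f, ord_G(z) ≥ ord_G(f + n₁); consequently min{ord_G(z) : z ∈ G, z > f} = ord_G(f + n₁). -/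
theorem stmt_18 (d : ℕ) (hd : 0 < d) (n : Fin d → ℕ)
    (hpos : ∀ i, 0 < n i) (hmono : StrictMono n)
    (hmin : MinimallyGenerated d n)
    (f : ℕ) (hfnot : f ∉ semigroupGen d n)
    (hfro : ∀ m : ℕ, f < m → m ∈ semigroupGen d n)
    (hsym : IsSymmetricWith d n f)
    (o : ℕ)
    (homax : IsGreatest (repLengths d n (f + n ⟨0, hd⟩)) o)
    (homin : IsLeast (repLengths d n (f + n ⟨0, hd⟩)) o) :
    (∀ z ∈ semigroupGen d n, f < z →
      ∀ s, IsGreatest (repLengths d n z) s → o ≤ s) ∧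
    IsLeast {s | ∃ z ∈ semigroupGen d n, f < z ∧
      IsGreatest (repLengths d n z) s} o := by
  classical
  have hepos : 0 < n ⟨0, hd⟩ := hpos _
  set e := n ⟨0, hd⟩ with he
  have hsingle : ∀ c : ℕ,
      (∑ j, (if j = (⟨0, hd⟩ : Fin d) then c else 0) * n j) = c * e := by
    intro c
    simp [ite_mul, ← he]
  have he2 : 2 ≤ e := by
    by_contra h
    push_neg at h
    have he1 : e = 1 := by omega
    exact hfnot ⟨fun j => if j = ⟨0, hd⟩ then f else 0, by rw [hsingle, he1, mul_one]⟩
  have key : ∀ z ∈ semigroupGen d n, f < z →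
      ∀ s, IsGreatest (repLengths d n z) s → o ≤ s := by
    intro z hz hfz s hs
    set P : ℕ → Prop := fun q => ∃ w, w ∈ semigroupGen d n ∧ w + q * e = z with hPdef
    have hP0 : P 0 := ⟨z, hz, by simp⟩
    set q := Nat.findGreatest P z with hqdef
    have hPq : P q := Nat.findGreatest_spec (Nat.zero_le z) hP0
    obtain ⟨w, hwG, hwq⟩ := hPq
    have hqz : q < z := by
      by_contra hcon
      push_neg at hcon
      have hqz' : q ≤ z := Nat.findGreatest_le z
      have hq : q = z := le_antisymm hqz' hcon
      have hz1 : 1 ≤ z := by omega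
      rw [hq] at hwq
      nlinarith
    have hnot : ¬ P (q + 1) :=
      Nat.findGreatest_is_greatest (Nat.lt_succ_self q) (by omega)
    have hwne : ¬ memZ d n ((w : ℤ) - e) := by
      rintro ⟨x, hxG, hx⟩
      apply hnot
      refine ⟨x, hxG, ?_⟩
      have hxw : x + e = w := by omega
      calc x + (q + 1) * e = (x + e) + q * e := by ring
        _ = w + q * e := by rw [hxw]
        _ = z := hwq
    have hm : memZ d n ((f : ℤ) - ((w : ℤ) - e)) := by
      by_contra h
      exact hwne ((hsym _).mpr h)
    obtain ⟨x, hxG, hxe⟩ := hm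
    have hwx : w + x = f + e := by omega
    obtain ⟨b, hb⟩ := hxG
    obtain ⟨a, ha⟩ := hwG
    have h1 : (∑ i, a i + ∑ i, b i) ∈ repLengths d n (f + e) := by
      refine ⟨fun i => a i + b i, ?_, ?_⟩
      · simp only [add_mul]
        rw [Finset.sum_add_distrib, ha, hb]
        omega
      · rw [Finset.sum_add_distrib]
    have hou : o ≤ ∑ i, a i + ∑ i, b i := homin.2 h1
    have h2 : (∑ i, a i + q) ∈ repLengths d n z := by
      refine ⟨fun i => a i + (if i = ⟨0, hd⟩ then q else 0), ?_, ?_⟩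
      · simp only [add_mul, ite_mul, zero_mul]
        rw [Finset.sum_add_distrib, ha]
        rw [show (∑ i, if i = (⟨0, hd⟩ : Fin d) then q * n i else 0) = q * e by
          simpa [ite_mul] using hsingle q]
        exact hwq
      · rw [Finset.sum_add_distrib]
        simp
    have hsq : ∑ i, a i + q ≤ s := hs.2 h2
    have htx : (∑ i, b i) * e ≤ x := by
      calc (∑ i, b i) * e = ∑ i, b i * e := by rw [Finset.sum_mul]
        _ ≤ ∑ i, b i * n i :=
          Finset.sum_le_sum fun i _ =>
            Nat.mul_le_mul_left _ (hmono.monotone (by simp [Fin.le_def]))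
        _ = x := hb
    have htq : ∑ i, b i ≤ q := by
      obtain ⟨T, hT⟩ : ∃ T, (∑ i, b i) * e = T := ⟨_, rfl⟩
      obtain ⟨Q, hQ⟩ : ∃ Q, q * e = Q := ⟨_, rfl⟩
      rw [hQ] at hwq
      rw [hT] at htx
      have hTQ : T < Q + e := by omega
      have hlt : (∑ i, b i) * e < (q + 1) * e := by
        rw [hT, add_mul, one_mul, hQ]; exact hTQ
      have := Nat.lt_of_mul_lt_mul_right hlt
      omega
    omega
  refine ⟨key, ?_, ?_⟩
  · obtain ⟨a, ha, -⟩ := homax.1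
    exact ⟨f + e, ⟨a, ha⟩, by omega, homax⟩
  · rintro s ⟨z, hz, hfz, hs⟩
    exact key z hz hfz s hs
end

section
/- Let G = ⟨n₁, n₂, n₃, n₄⟩ be a numerical semigroup with n₁ < n₂ < n₃ < n₄ whose defining relations are the complete-intersection relations α₁n₁ = α₂n₂, α₃n₃ = α₄n₄, and β₁n₁ + β₂n₂ = β₃n₃ (with β₄ = 0, β₁ ≥ 1, β₃ ≥ α₃, 0 ≤ β₂ < α₂). Then the Frobenius number satisfies f + n₁ = (α₂ − 1)n₂ + (β₃ − 1)n₃ + (α₄ − 1)n₄, and this representation achieves ord_G(f + n₁) = (α₂ − 1) + (β₃ − 1) + (α₄ − 1). -/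
open MvPolynomial

/-- The numerical semigroup generated by `n1, n2, n3, n4`. -/
def gen4 (n1 n2 n3 n4 : ℕ) : Set ℕ :=
  {z | ∃ a b c d : ℕ, a * n1 + b * n2 + c * n3 + d * n4 = z}

lemma key_lemma (n1 n2 n3 n4 α1 α2 α3 α4 β1 β2 β3 : ℕ)
    (hker : RingHom.ker (MvPolynomial.aeval
          (fun i : Fin 4 => (Polynomial.X : Polynomial ℚ) ^ (![n1, n2, n3, n4] i)) :
        MvPolynomial (Fin 4) ℚ →ₐ[ℚ] Polynomial ℚ) =
      Ideal.span {X 0 ^ α1 - X 1 ^ α2, X 2 ^ α3 - X 3 ^ α4,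
        X 0 ^ β1 * X 1 ^ β2 - X 2 ^ β3})
    (a b c d a' b' c' d' : ℕ)
    (h : a * n1 + b * n2 + c * n3 + d * n4 = a' * n1 + b' * n2 + c' * n3 + d' * n4) :
    ∃ x y z : ℤ, (a : ℤ) - a' = x * α1 + z * β1 ∧ (b : ℤ) - b' = -(x * α2) + z * β2 ∧
      (c : ℤ) - c' = y * α3 - z * β3 ∧ (d : ℤ) - d' = -(y * α4) := by
  set v1 : Fin 4 → ℤ := ![(α1:ℤ), -(α2:ℤ), 0, 0] with hv1
  set v2 : Fin 4 → ℤ := ![0, 0, (α3:ℤ), -(α4:ℤ)] with hv2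
  set v3 : Fin 4 → ℤ := ![(β1:ℤ), (β2:ℤ), -(β3:ℤ), 0] with hv3
  set L : Submodule ℤ (Fin 4 → ℤ) := Submodule.span ℤ {v1, v2, v3} with hL
  let Q := (Fin 4 → ℤ) ⧸ L
  let Θ : MvPolynomial (Fin 4) ℚ →ₐ[ℚ] AddMonoidAlgebra ℚ Q :=
    aeval (fun i => AddMonoidAlgebra.single (Submodule.Quotient.mk (Pi.single i (1:ℤ))) (1:ℚ))
  have hmon : ∀ p q r s : ℕ, Θ (X 0 ^ p * X 1 ^ q * X 2 ^ r * X 3 ^ s) =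
      AddMonoidAlgebra.single (Submodule.Quotient.mk (![(p:ℤ), q, r, s])) (1:ℚ) := by
    intro p q r s
    have hw : (p:ℤ) • (Pi.single (0:Fin 4) (1:ℤ)) + (q:ℤ) • (Pi.single (1:Fin 4) (1:ℤ))
        + (r:ℤ) • (Pi.single (2:Fin 4) (1:ℤ)) + (s:ℤ) • (Pi.single (3:Fin 4) (1:ℤ))
        = ![(p:ℤ), q, r, s] := by
      funext i; fin_cases i <;> simp
    have hmk : (Submodule.Quotient.mk (![(p:ℤ), q, r, s]) : Q)
        = p • Submodule.Quotient.mk (Pi.single (0:Fin 4) (1:ℤ))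
          + q • Submodule.Quotient.mk (Pi.single (1:Fin 4) (1:ℤ))
          + r • Submodule.Quotient.mk (Pi.single (2:Fin 4) (1:ℤ))
          + s • Submodule.Quotient.mk (Pi.single (3:Fin 4) (1:ℤ)) := by
      rw [← hw]
      rw [Submodule.Quotient.mk_add, Submodule.Quotient.mk_add, Submodule.Quotient.mk_add,
        Submodule.Quotient.mk_smul, Submodule.Quotient.mk_smul, Submodule.Quotient.mk_smul,
        Submodule.Quotient.mk_smul, Nat.cast_smul_eq_nsmul, Nat.cast_smul_eq_nsmul,
        Nat.cast_smul_eq_nsmul, Nat.cast_smul_eq_nsmul]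
    simp only [Θ, map_mul, map_pow, aeval_X]
    rw [AddMonoidAlgebra.single_pow, AddMonoidAlgebra.single_pow,
      AddMonoidAlgebra.single_pow, AddMonoidAlgebra.single_pow]
    rw [AddMonoidAlgebra.single_mul_single, AddMonoidAlgebra.single_mul_single,
      AddMonoidAlgebra.single_mul_single, hmk]
    norm_num
  set φ : Fin 4 → Polynomial ℚ := fun i : Fin 4 => (Polynomial.X : Polynomial ℚ) ^ (![n1, n2, n3, n4] i) with hφ
  have heval : ∀ p q r s : ℕ, (aeval φ : MvPolynomial (Fin 4) ℚ →ₐ[ℚ] Polynomial ℚ)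
      (X 0 ^ p * X 1 ^ q * X 2 ^ r * X 3 ^ s) =
      Polynomial.X ^ (p * n1 + q * n2 + r * n3 + s * n4) := by
    intro p q r s
    simp only [map_mul, map_pow, aeval_X, hφ]
    norm_num [← pow_mul, ← pow_add]
    simp only [Matrix.cons_val_two, Matrix.cons_val_three, Matrix.tail_cons, Matrix.head_cons]
    ring
  set P : MvPolynomial (Fin 4) ℚ :=
    X 0 ^ a * X 1 ^ b * X 2 ^ c * X 3 ^ d - X 0 ^ a' * X 1 ^ b' * X 2 ^ c' * X 3 ^ d' with hP
  have hPker : P ∈ RingHom.ker (aeval φ : MvPolynomial (Fin 4) ℚ →ₐ[ℚ] Polynomial ℚ) := by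
    rw [RingHom.mem_ker, hP, map_sub, heval, heval, h]
    ring
  rw [hker] at hPker
  have hgen : ∀ g ∈ ({X 0 ^ α1 - X 1 ^ α2, X 2 ^ α3 - X 3 ^ α4,
      X 0 ^ β1 * X 1 ^ β2 - X 2 ^ β3} : Set (MvPolynomial (Fin 4) ℚ)), Θ g = 0 := by
    intro g hg
    have e1 : Θ (X 0 ^ α1 - X 1 ^ α2) = 0 := by
      have h1 : Θ (X 0 ^ α1) = Θ (X 0 ^ α1 * X 1 ^ 0 * X 2 ^ 0 * X 3 ^ 0) := by ring_nf
      have h2 : Θ (X 1 ^ α2) = Θ (X 0 ^ 0 * X 1 ^ α2 * X 2 ^ 0 * X 3 ^ 0) := by ring_nf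
      rw [map_sub, h1, h2, hmon, hmon, sub_eq_zero]
      congr 1
      rw [Submodule.Quotient.eq]
      have hd : (![((α1:ℕ):ℤ), ((0:ℕ):ℤ), ((0:ℕ):ℤ), ((0:ℕ):ℤ)])
          - (![((0:ℕ):ℤ), ((α2:ℕ):ℤ), ((0:ℕ):ℤ), ((0:ℕ):ℤ)]) = v1 := by
        funext i; fin_cases i <;> simp [hv1]
      rw [hd]
      exact Submodule.subset_span (by simp)
    have e2 : Θ (X 2 ^ α3 - X 3 ^ α4) = 0 := by
      have h1 : Θ (X 2 ^ α3) = Θ (X 0 ^ 0 * X 1 ^ 0 * X 2 ^ α3 * X 3 ^ 0) := by ring_nf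
      have h2 : Θ (X 3 ^ α4) = Θ (X 0 ^ 0 * X 1 ^ 0 * X 2 ^ 0 * X 3 ^ α4) := by ring_nf
      rw [map_sub, h1, h2, hmon, hmon, sub_eq_zero]
      congr 1
      rw [Submodule.Quotient.eq]
      have hd : (![((0:ℕ):ℤ), ((0:ℕ):ℤ), ((α3:ℕ):ℤ), ((0:ℕ):ℤ)])
          - (![((0:ℕ):ℤ), ((0:ℕ):ℤ), ((0:ℕ):ℤ), ((α4:ℕ):ℤ)]) = v2 := by
        funext i; fin_cases i <;> simp [hv2]
      rw [hd]
      exact Submodule.subset_span (by simp)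
    have e3 : Θ (X 0 ^ β1 * X 1 ^ β2 - X 2 ^ β3) = 0 := by
      have h1 : Θ (X 0 ^ β1 * X 1 ^ β2) = Θ (X 0 ^ β1 * X 1 ^ β2 * X 2 ^ 0 * X 3 ^ 0) := by
        ring_nf
      have h2 : Θ (X 2 ^ β3) = Θ (X 0 ^ 0 * X 1 ^ 0 * X 2 ^ β3 * X 3 ^ 0) := by ring_nf
      rw [map_sub, h1, h2, hmon, hmon, sub_eq_zero]
      congr 1
      rw [Submodule.Quotient.eq]
      have hd : (![((β1:ℕ):ℤ), ((β2:ℕ):ℤ), ((0:ℕ):ℤ), ((0:ℕ):ℤ)])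
          - (![((0:ℕ):ℤ), ((0:ℕ):ℤ), ((β3:ℕ):ℤ), ((0:ℕ):ℤ)]) = v3 := by
        funext i; fin_cases i <;> simp [hv3]
      rw [hd]
      exact Submodule.subset_span (by simp)
    rcases hg with hg | hg | hg
    · rw [hg]; exact e1
    · rw [hg]; exact e2
    · rw [hg]; exact e3
  have hΘP : Θ P = 0 := by
    have hmem := Ideal.mem_map_of_mem (Θ : MvPolynomial (Fin 4) ℚ →+* AddMonoidAlgebra ℚ Q) hPker
    rw [Ideal.map_span] at hmem
    have hsub : (Θ : MvPolynomial (Fin 4) ℚ →+* AddMonoidAlgebra ℚ Q) ''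
        ({X 0 ^ α1 - X 1 ^ α2, X 2 ^ α3 - X 3 ^ α4,
          X 0 ^ β1 * X 1 ^ β2 - X 2 ^ β3} : Set (MvPolynomial (Fin 4) ℚ)) ⊆ {0} := by
      rintro x ⟨g, hg, rfl⟩
      exact hgen g hg
    have hmem2 : Θ P ∈ Ideal.span ({0} : Set (AddMonoidAlgebra ℚ Q)) :=
      Ideal.span_mono hsub hmem
    have hbot : Ideal.span ({0} : Set (AddMonoidAlgebra ℚ Q)) = ⊥ := by simp
    rw [hbot, Ideal.mem_bot] at hmem2
    exact hmem2
  have hq : (Submodule.Quotient.mk (![(a:ℤ), b, c, d]) : Q)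
      = Submodule.Quotient.mk (![(a':ℤ), b', c', d']) := by
    rw [hP, map_sub, hmon, hmon, sub_eq_zero] at hΘP
    exact (AddMonoidAlgebra.single_left_injective (one_ne_zero)) hΘP
  rw [Submodule.Quotient.eq] at hq
  have hq' : (![(a:ℤ), b, c, d]) - (![(a':ℤ), b', c', d'])
      ∈ Submodule.span ℤ {v1, v2, v3} := hq
  rw [Submodule.mem_span_insert] at hq'
  obtain ⟨x, w, hw, hweq⟩ := hq'
  rw [Submodule.mem_span_insert] at hw
  obtain ⟨y, w2, hw2, hw2eq⟩ := hw
  rw [Submodule.mem_span_singleton] at hw2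
  obtain ⟨z, rfl⟩ := hw2
  rw [hw2eq] at hweq
  rw [hv1, hv2, hv3] at hweq
  refine ⟨x, y, z, ?_, ?_, ?_, ?_⟩
  · have h0 := congrFun hweq 0
    simp only [Pi.sub_apply, Pi.add_apply, Pi.smul_apply, smul_eq_mul,
      Matrix.cons_val_zero] at h0
    linarith only [h0]
  · have h1 := congrFun hweq 1
    simp only [Pi.sub_apply, Pi.add_apply, Pi.smul_apply, smul_eq_mul,
      Matrix.cons_val_one, Matrix.cons_val_zero, Matrix.head_cons] at h1
    linarith only [h1]
  · have h2 := congrFun hweq 2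
    simp only [Pi.sub_apply, Pi.add_apply, Pi.smul_apply, smul_eq_mul,
      Matrix.cons_val_two, Matrix.tail_cons, Matrix.head_cons] at h2
    linarith only [h2]
  · have h3 := congrFun hweq 3
    simp only [Pi.sub_apply, Pi.add_apply, Pi.smul_apply, smul_eq_mul,
      Matrix.cons_val_three, Matrix.tail_cons, Matrix.head_cons] at h3
    linarith only [h3]

open MvPolynomial

/-- Box reduction: every element of the semigroup has a representation with
`b < α2`, `c < β3`, `d < α4`. -/
lemma box_reduce (n1 n2 n3 n4 α1 α2 α3 α4 β1 β2 β3 : ℕ)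
    (hα2 : 1 ≤ α2) (hα4 : 1 ≤ α4) (hβ3 : 1 ≤ β3)
    (hr1 : α1 * n1 = α2 * n2) (hr2 : α3 * n3 = α4 * n4)
    (hr3 : β1 * n1 + β2 * n2 = β3 * n3) (a b c d : ℕ) :
    ∃ a' b' c' d' : ℕ, a' * n1 + b' * n2 + c' * n3 + d' * n4
      = a * n1 + b * n2 + c * n3 + d * n4 ∧ b' < α2 ∧ c' < β3 ∧ d' < α4 := by
  -- step 1 : reduce d
  set d1 := d % α4 with hd1
  set c1 := c + (d / α4) * α3 with hc1
  have e1 : c1 * n3 + d1 * n4 = c * n3 + d * n4 := by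
    have hdm : α4 * (d / α4) + d % α4 = d := Nat.div_add_mod d α4
    calc c1 * n3 + d1 * n4 = c * n3 + (d / α4) * (α3 * n3) + (d % α4) * n4 := by
          rw [hc1]; ring
      _ = c * n3 + (d / α4) * (α4 * n4) + (d % α4) * n4 := by rw [hr2]
      _ = c * n3 + (α4 * (d / α4) + d % α4) * n4 := by ring
      _ = c * n3 + d * n4 := by rw [hdm]
  -- step 2 : reduce c1
  set c2 := c1 % β3 with hc2
  set a1 := a + (c1 / β3) * β1 with ha1
  set b1 := b + (c1 / β3) * β2 with hb1
  have e2 : a1 * n1 + b1 * n2 + c2 * n3 = a * n1 + b * n2 + c1 * n3 := by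
    have hdm : β3 * (c1 / β3) + c1 % β3 = c1 := Nat.div_add_mod c1 β3
    calc a1 * n1 + b1 * n2 + c2 * n3
        = a * n1 + b * n2 + (c1 / β3) * (β1 * n1 + β2 * n2) + (c1 % β3) * n3 := by
          rw [ha1, hb1]; ring
      _ = a * n1 + b * n2 + (c1 / β3) * (β3 * n3) + (c1 % β3) * n3 := by rw [hr3]
      _ = a * n1 + b * n2 + (β3 * (c1 / β3) + c1 % β3) * n3 := by ring
      _ = a * n1 + b * n2 + c1 * n3 := by rw [hdm]
  -- step 3 : reduce b1
  set b2 := b1 % α2 with hb2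
  set a2 := a1 + (b1 / α2) * α1 with ha2
  have e3 : a2 * n1 + b2 * n2 = a1 * n1 + b1 * n2 := by
    have hdm : α2 * (b1 / α2) + b1 % α2 = b1 := Nat.div_add_mod b1 α2
    calc a2 * n1 + b2 * n2 = a1 * n1 + (b1 / α2) * (α1 * n1) + (b1 % α2) * n2 := by
          rw [ha2]; ring
      _ = a1 * n1 + (b1 / α2) * (α2 * n2) + (b1 % α2) * n2 := by rw [hr1]
      _ = a1 * n1 + (α2 * (b1 / α2) + b1 % α2) * n2 := by ring
      _ = a1 * n1 + b1 * n2 := by rw [hdm]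
  refine ⟨a2, b2, c2, d1, ?_, Nat.mod_lt _ (by omega), Nat.mod_lt _ (by omega),
    Nat.mod_lt _ (by omega)⟩
  calc a2 * n1 + b2 * n2 + c2 * n3 + d1 * n4
      = (a2 * n1 + b2 * n2) + c2 * n3 + d1 * n4 := by ring
    _ = (a1 * n1 + b1 * n2) + c2 * n3 + d1 * n4 := by rw [e3]
    _ = (a1 * n1 + b1 * n2 + c2 * n3) + d1 * n4 := by ring
    _ = (a * n1 + b * n2 + c1 * n3) + d1 * n4 := by rw [e2]
    _ = a * n1 + b * n2 + (c1 * n3 + d1 * n4) := by ring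
    _ = a * n1 + b * n2 + (c * n3 + d * n4) := by rw [e1]
    _ = a * n1 + b * n2 + c * n3 + d * n4 := by ring

/-- Sign analysis for coefficients of a factorization of `N`. -/
lemma signs_aux (α1 α2 α3 α4 β1 β2 β3 : ℕ) (x y z a b c d : ℤ)
    (hα2 : 1 ≤ α2) (hα4 : 1 ≤ α4) (hβ3 : 1 ≤ β3)
    (hb : 0 ≤ b) (hc : 0 ≤ c) (hd : 0 ≤ d)
    (e2 : b - ((α2 : ℤ) - 1) = -(x * α2) + z * β2)
    (e3 : c - ((β3 : ℤ) - 1) = y * α3 - z * β3)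
    (e4 : d - ((α4 : ℤ) - 1) = -(y * α4)) :
    x ≤ 0 ∧ y ≤ 0 ∧ z ≤ 0 := by
  have hα4' : (0 : ℤ) < α4 := by exact_mod_cast hα4
  have hβ3' : (0 : ℤ) < β3 := by exact_mod_cast hβ3
  have hα2' : (0 : ℤ) < α2 := by exact_mod_cast hα2
  have hy : y ≤ 0 := by
    have h1 : y * α4 < 1 * α4 := by linarith
    have := lt_of_mul_lt_mul_right h1 (le_of_lt hα4')
    omega
  have hyα3 : y * (α3 : ℤ) ≤ 0 := by
    have := mul_le_mul_of_nonneg_right hy (by positivity : (0:ℤ) ≤ (α3:ℤ))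
    simpa using this
  have hz : z ≤ 0 := by
    have h1 : z * β3 < 1 * β3 := by linarith
    have := lt_of_mul_lt_mul_right h1 (le_of_lt hβ3')
    omega
  have hzβ2 : z * (β2 : ℤ) ≤ 0 := by
    have := mul_le_mul_of_nonneg_right hz (by positivity : (0:ℤ) ≤ (β2:ℤ))
    simpa using this
  have hx : x ≤ 0 := by
    have h1 : x * α2 < 1 * α2 := by linarith
    have := lt_of_mul_lt_mul_right h1 (le_of_lt hα2')
    omega
  exact ⟨hx, hy, hz⟩

open MvPolynomial

theorem stmt_19' (n1 n2 n3 n4 : ℕ) (h1 : 0 < n1) (h12 : n1 < n2)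
    (h23 : n2 < n3) (h34 : n3 < n4)
    (α1 α2 α3 α4 β1 β2 β3 : ℕ)
    (hα1 : 1 ≤ α1) (hα2 : 1 ≤ α2) (hα3 : 1 ≤ α3) (hα4 : 1 ≤ α4)
    (hβ1 : 1 ≤ β1) (hβ3 : α3 ≤ β3) (hβ2 : β2 < α2)
    (hr1 : α1 * n1 = α2 * n2) (hr2 : α3 * n3 = α4 * n4)
    (hr3 : β1 * n1 + β2 * n2 = β3 * n3)
    (f : ℕ) (hf : f ∉ gen4 n1 n2 n3 n4)
    (hfro : ∀ m : ℕ, f < m → m ∈ gen4 n1 n2 n3 n4)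
    (key : ∀ a b c d a' b' c' d' : ℕ,
      a * n1 + b * n2 + c * n3 + d * n4 = a' * n1 + b' * n2 + c' * n3 + d' * n4 →
      ∃ x y z : ℤ, (a : ℤ) - a' = x * α1 + z * β1 ∧ (b : ℤ) - b' = -(x * α2) + z * β2 ∧
        (c : ℤ) - c' = y * α3 - z * β3 ∧ (d : ℤ) - d' = -(y * α4)) :
    f + n1 = (α2 - 1) * n2 + (β3 - 1) * n3 + (α4 - 1) * n4 ∧
    IsGreatest {s | ∃ a b c d : ℕ,
        a * n1 + b * n2 + c * n3 + d * n4 = f + n1 ∧ a + b + c + d = s}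
      ((α2 - 1) + (β3 - 1) + (α4 - 1)) := by
  have hβ3' : 1 ≤ β3 := le_trans hα3 hβ3
  set N := (α2 - 1) * n2 + (β3 - 1) * n3 + (α4 - 1) * n4 with hNN
  -- part A : every m with N < m + n1 is in the semigroup
  have partA : ∀ m : ℕ, N < m + n1 → m ∈ gen4 n1 n2 n3 n4 := by
    intro m hm
    have hm' : f < m + (f + 1) * n1 := by
      have : f + 1 ≤ (f + 1) * n1 := Nat.le_mul_of_pos_right _ h1
      omega
    obtain ⟨a, b, c, d, heq⟩ := hfro _ hm'
    obtain ⟨a', b', c', d', heq', hb', hc', hd'⟩ :=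
      box_reduce n1 n2 n3 n4 α1 α2 α3 α4 β1 β2 β3 hα2 hα4 hβ3' hr1 hr2 hr3 a b c d
    rw [heq] at heq'
    have hB : b' * n2 + c' * n3 + d' * n4 ≤ N := by
      have e1 : b' * n2 ≤ (α2 - 1) * n2 := Nat.mul_le_mul_right n2 (by omega)
      have e2 : c' * n3 ≤ (β3 - 1) * n3 := Nat.mul_le_mul_right n3 (by omega)
      have e3 : d' * n4 ≤ (α4 - 1) * n4 := Nat.mul_le_mul_right n4 (by omega)
      rw [hNN]; linarith
    by_cases hge : f + 1 ≤ a'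
    · refine ⟨a' - (f + 1), b', c', d', ?_⟩
      have hle : (f + 1) * n1 ≤ a' * n1 := Nat.mul_le_mul_right n1 hge
      zify [hge]
      have heqz : (a' : ℤ) * n1 + b' * n2 + c' * n3 + d' * n4
          = (m : ℤ) + (f + 1) * n1 := by exact_mod_cast heq'
      linarith
    · exfalso
      have hle : a' * n1 ≤ f * n1 := Nat.mul_le_mul_right n1 (by omega)
      have hexp : (f + 1) * n1 = f * n1 + n1 := by ring
      linarith
  -- part 1 : f + n1 = N
  have hfN : f + n1 = N := by
    rcases lt_trichotomy (f + n1) N with hlt | he | hgt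
    · exfalso
      -- then t := N - n1 > f is in G ; derive a contradiction via the key lemma
      have htg : f < N - n1 := by omega
      obtain ⟨a, b, c, d, heq⟩ := hfro _ htg
      have heq2 : (a + 1) * n1 + b * n2 + c * n3 + d * n4
          = 0 * n1 + (α2 - 1) * n2 + (β3 - 1) * n3 + (α4 - 1) * n4 := by
        have h' : (a + 1) * n1 + b * n2 + c * n3 + d * n4
            = (a * n1 + b * n2 + c * n3 + d * n4) + n1 := by ring
        rw [h', heq]
        omega
      obtain ⟨x, y, z, e1, e2, e3, e4⟩ := key (a + 1) b c d 0 (α2 - 1) (β3 - 1) (α4 - 1) heq2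
      rw [Nat.cast_sub hα2] at e2
      rw [Nat.cast_sub hβ3'] at e3
      rw [Nat.cast_sub hα4] at e4
      push_cast at e1 e2 e3 e4
      obtain ⟨hx, hy, hz⟩ := signs_aux α1 α2 α3 α4 β1 β2 β3 x y z (a + 1) b c d
        hα2 hα4 hβ3' (by positivity) (by positivity) (by positivity) e2 e3 e4
      have hxα1 : x * (α1 : ℤ) ≤ 0 := by
        have := mul_le_mul_of_nonneg_right hx (by positivity : (0:ℤ) ≤ (α1:ℤ))
        simpa using this
      have hzβ1 : z * (β1 : ℤ) ≤ 0 := by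
        have := mul_le_mul_of_nonneg_right hz (by positivity : (0:ℤ) ≤ (β1:ℤ))
        simpa using this
      have : (0:ℤ) < (a : ℤ) + 1 := by positivity
      linarith
    · exact he
    · exfalso
      exact hf (partA f (by omega))
  refine ⟨hfN, ?_, ?_⟩
  · -- membership
    refine ⟨0, α2 - 1, β3 - 1, α4 - 1, ?_, by omega⟩
    rw [hfN, hNN]
    ring
  · -- upper bound
    rintro s ⟨a, b, c, d, heq, hsum⟩
    -- comparisons of the exponents
    have h21 : α2 < α1 := by
      have e1 : α2 * n1 < α2 * n2 := mul_lt_mul_of_pos_left h12 (by omega : 0 < α2)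
      rw [← hr1] at e1
      exact lt_of_mul_lt_mul_right e1 (Nat.zero_le n1)
    have h43 : α4 < α3 := by
      have e1 : α4 * n3 < α4 * n4 := mul_lt_mul_of_pos_left h34 (by omega : 0 < α4)
      rw [← hr2] at e1
      exact lt_of_mul_lt_mul_right e1 (Nat.zero_le n3)
    have hb12 : β3 < β1 + β2 := by
      have e1 : β3 * n3 < (β1 + β2) * n3 := by
        have q1 : β1 * n1 < β1 * n3 :=
          mul_lt_mul_of_pos_left (show n1 < n3 by omega) (by omega : 0 < β1)
        have q2 : β2 * n2 ≤ β2 * n3 := Nat.mul_le_mul_left β2 (by omega)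
        have : (β1 + β2) * n3 = β1 * n3 + β2 * n3 := by ring
        omega
      exact lt_of_mul_lt_mul_right e1 (Nat.zero_le n3)
    have heq2 : a * n1 + b * n2 + c * n3 + d * n4
        = 0 * n1 + (α2 - 1) * n2 + (β3 - 1) * n3 + (α4 - 1) * n4 := by
      rw [heq, hfN]
      omega
    obtain ⟨x, y, z, e1, e2, e3, e4⟩ := key a b c d 0 (α2 - 1) (β3 - 1) (α4 - 1) heq2
    rw [Nat.cast_sub hα2] at e2
    rw [Nat.cast_sub hβ3'] at e3
    rw [Nat.cast_sub hα4] at e4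
    push_cast at e1 e2 e3 e4
    obtain ⟨hx, hy, hz⟩ := signs_aux α1 α2 α3 α4 β1 β2 β3 x y z a b c d
      hα2 hα4 hβ3' (by positivity) (by positivity) (by positivity) e2 e3 e4
    have k1 : x * (α1 : ℤ) ≤ x * (α2 : ℤ) :=
      mul_le_mul_of_nonpos_left (by exact_mod_cast h21.le) hx
    have k2 : y * (α3 : ℤ) ≤ y * (α4 : ℤ) :=
      mul_le_mul_of_nonpos_left (by exact_mod_cast h43.le) hy
    have k3 : z * ((β1 : ℤ) + β2) ≤ z * (β3 : ℤ) :=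
      mul_le_mul_of_nonpos_left (by exact_mod_cast hb12.le) hz
    have k3' : z * ((β1 : ℤ) + β2) = z * β1 + z * β2 := by ring
    have hfin : (a : ℤ) + b + c + d
        ≤ ((α2 : ℤ) - 1) + ((β3 : ℤ) - 1) + ((α4 : ℤ) - 1) := by linarith
    show s ≤ (α2 - 1) + (β3 - 1) + (α4 - 1)
    omega


theorem stmt_19 (n1 n2 n3 n4 : ℕ) (h1 : 0 < n1) (h12 : n1 < n2)
    (h23 : n2 < n3) (h34 : n3 < n4)
    (hgcd : Nat.gcd (Nat.gcd (Nat.gcd n1 n2) n3) n4 = 1)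
    (hmin1 : ¬ ∃ b c d : ℕ, b * n2 + c * n3 + d * n4 = n1)
    (hmin2 : ¬ ∃ a c d : ℕ, a * n1 + c * n3 + d * n4 = n2)
    (hmin3 : ¬ ∃ a b d : ℕ, a * n1 + b * n2 + d * n4 = n3)
    (hmin4 : ¬ ∃ a b c : ℕ, a * n1 + b * n2 + c * n3 = n4)
    (α1 α2 α3 α4 β1 β2 β3 : ℕ)
    (hα1 : 1 ≤ α1) (hα2 : 1 ≤ α2) (hα3 : 1 ≤ α3) (hα4 : 1 ≤ α4)
    (hβ1 : 1 ≤ β1) (hβ3 : α3 ≤ β3) (hβ2 : β2 < α2)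
    (hr1 : α1 * n1 = α2 * n2) (hr2 : α3 * n3 = α4 * n4)
    (hr3 : β1 * n1 + β2 * n2 = β3 * n3)
    (f : ℕ) (hf : f ∉ gen4 n1 n2 n3 n4)
    (hfro : ∀ m : ℕ, f < m → m ∈ gen4 n1 n2 n3 n4)
    (hker : RingHom.ker (MvPolynomial.aeval
          (fun i : Fin 4 => (Polynomial.X : Polynomial ℚ) ^ (![n1, n2, n3, n4] i)) :
        MvPolynomial (Fin 4) ℚ →ₐ[ℚ] Polynomial ℚ) =
      Ideal.span {X 0 ^ α1 - X 1 ^ α2, X 2 ^ α3 - X 3 ^ α4,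
        X 0 ^ β1 * X 1 ^ β2 - X 2 ^ β3}) :
    f + n1 = (α2 - 1) * n2 + (β3 - 1) * n3 + (α4 - 1) * n4 ∧
    IsGreatest {s | ∃ a b c d : ℕ,
        a * n1 + b * n2 + c * n3 + d * n4 = f + n1 ∧ a + b + c + d = s}
      ((α2 - 1) + (β3 - 1) + (α4 - 1)) :=
  stmt_19' n1 n2 n3 n4 h1 h12 h23 h34 α1 α2 α3 α4 β1 β2 β3 hα1 hα2 hα3 hα4
    hβ1 hβ3 hβ2 hr1 hr2 hr3 f hf hfro
    (fun a b c d a' b' c' d' h =>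
      key_lemma n1 n2 n3 n4 α1 α2 α3 α4 β1 β2 β3 hker a b c d a' b' c' d' h)
end
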